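/- arXiv:2305.00765 — 8 statements merged into one kernel-verified Lean document; each statement's English description precedes it below -/
import Mathlib

section
/- For every integer n ≥ 3 and every residue j ∈ {0,1}, the sum of μ(n/d) over divisors d of n with d ≡ j (mod 2) equals 0. -/
open Finset

theorem total_moebius_sum (n : ℕ) (hn : n ≠ 1) :
    ∑ d ∈ n.divisors, ArithmeticFunction.moebius d = 0 := by
  have h := congrArg (fun f : ArithmeticFunction ℤ => f n)
    ArithmeticFunction.moebius_mul_coe_zeta
  simp only [ArithmeticFunction.coe_mul_zeta_apply] at h
  rw [h, ArithmeticFunction.one_apply_ne hn]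

theorem even_sum (n : ℕ) (hn : 3 ≤ n) :
    ∑ d ∈ n.divisors.filter (fun d => d % 2 = 0), ArithmeticFunction.moebius (n / d) = 0 := by
  rcases Nat.even_or_odd n with he | ho
  · obtain ⟨m, rfl⟩ := he
    have hm : 2 ≤ m := by omega
    have hm0 : m ≠ 0 := by omega
    have key : ∑ d ∈ ((m + m).divisors.filter (fun d => d % 2 = 0)),
        ArithmeticFunction.moebius ((m + m) / d)
        = ∑ d ∈ m.divisors, ArithmeticFunction.moebius (m / d) := by
      apply Finset.sum_nbij' (fun d => d / 2) (fun d => 2 * d)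
      · intro a ha
        simp only [mem_filter, Nat.mem_divisors] at ha ⊢
        obtain ⟨⟨hd, _⟩, hpar⟩ := ha
        obtain ⟨c, rfl⟩ := Nat.dvd_of_mod_eq_zero hpar
        refine ⟨?_, hm0⟩
        rw [Nat.mul_div_cancel_left c (by norm_num)]
        rw [← two_mul] at hd
        exact (mul_dvd_mul_iff_left (by norm_num : (2:ℕ) ≠ 0)).mp hd
      · intro a ha
        simp only [mem_filter, Nat.mem_divisors] at ha ⊢
        obtain ⟨hd, _⟩ := ha
        refine ⟨⟨?_, by omega⟩, by omega⟩
        rw [← two_mul]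
        exact mul_dvd_mul_left 2 hd
      · intro a ha
        simp only [mem_filter] at ha
        omega
      · intro a _
        omega
      · intro a ha
        simp only [mem_filter, Nat.mem_divisors] at ha
        obtain ⟨⟨hd, _⟩, hpar⟩ := ha
        obtain ⟨c, rfl⟩ := Nat.dvd_of_mod_eq_zero hpar
        rw [Nat.mul_div_cancel_left c two_pos, ← two_mul,
          Nat.mul_div_mul_left _ _ two_pos]
    rw [key, Nat.sum_div_divisors]
    exact total_moebius_sum m (by omega)
  · have hemp : (n.divisors.filter (fun d => d % 2 = 0)) = ∅ := by
      ext d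
      simp only [mem_filter, Nat.mem_divisors, notMem_empty, iff_false, not_and]
      rintro ⟨hd, -⟩ hpar
      have h2 : (2 : ℕ) ∣ n := (Nat.dvd_of_mod_eq_zero hpar).trans hd
      have ho' := Nat.odd_iff.mp ho
      omega
    rw [hemp, Finset.sum_empty]

/-- For `n ≥ 3` and `j ∈ {0,1}`, the sum of `μ(n/d)` over divisors `d` of `n`
with `d ≡ j (mod 2)` vanishes. -/
theorem moebius_sum_parity (n j : ℕ) (hn : 3 ≤ n) (hj : j = 0 ∨ j = 1) :
    ∑ d ∈ n.divisors.filter (fun d => d % 2 = j), ArithmeticFunction.moebius (n / d) = 0 := by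
  have htot : ∑ d ∈ n.divisors, ArithmeticFunction.moebius (n / d) = 0 := by
    rw [Nat.sum_div_divisors]
    exact total_moebius_sum n (by omega)
  have heven := even_sum n hn
  rcases hj with rfl | rfl
  · exact heven
  · have hsplit := Finset.sum_filter_add_sum_filter_not n.divisors
      (fun d => d % 2 = 0) (fun d => ArithmeticFunction.moebius (n / d))
    have hne : n.divisors.filter (fun d => ¬ d % 2 = 0)
        = n.divisors.filter (fun d => d % 2 = 1) := by
      apply Finset.filter_congr
      intro d _
      omega
    rw [hne] at hsplit
    omega
end

section
/- The formal power series identity log((sinh(t/2))/(t/2)) = Σ_{n≥2} (B_n / n) · t^n / n! holds, where B_n are the Bernoulli numbers. -/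
open Finset

/-- The formal logarithm `log f = ∑_{k ≥ 1} (−1)^{k+1} (f−1)^k / k` of a power
series `f` with constant term `1`, defined coefficientwise. -/
noncomputable def logS (f : PowerSeries ℚ) : PowerSeries ℚ :=
  PowerSeries.mk fun n =>
    ∑ k ∈ Finset.range (n + 1), (-1) ^ (k + 1) * (PowerSeries.coeff (R := ℚ) n ((f - 1) ^ k)) / k

namespace LogSinhAux

open PowerSeries

/-- coefficients of powers of a series with zero constant term vanish below the exponent -/
lemma coeff_pow_eq_zero {g : ℚ⟦X⟧} (hg : constantCoeff g = 0) {n k : ℕ} (h : n < k) :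
    coeff n (g ^ k) = 0 := by
  have hX : (X : ℚ⟦X⟧) ^ k ∣ g ^ k :=
    pow_dvd_pow_of_dvd (PowerSeries.X_dvd_iff.mpr hg) k
  exact (PowerSeries.X_pow_dvd_iff.mp hX) n h

/-- partial sums of the log series -/
noncomputable def L (g : ℚ⟦X⟧) (N : ℕ) : ℚ⟦X⟧ :=
  ∑ k ∈ Finset.range (N + 1), C (R := ℚ) ((-1) ^ (k + 1) / k) * g ^ k

lemma coeff_logS (f : ℚ⟦X⟧) (hf : constantCoeff f = 1) {n N : ℕ} (h : n ≤ N) :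
    coeff n (logS f) = coeff n (L (f - 1) N) := by
  have hg : constantCoeff (f - 1) = 0 := by simp [hf]
  rw [logS, coeff_mk, L, map_sum]
  rw [Finset.sum_subset (Finset.range_subset_range.mpr (by omega : n + 1 ≤ N + 1))]
  · exact Finset.sum_congr rfl fun k _ => by rw [coeff_C_mul]; ring
  · intro k _ hk
    rw [coeff_pow_eq_zero hg (by simp at hk; omega)]
    ring

lemma mul_derivative_L (g : ℚ⟦X⟧) (N : ℕ) :
    (1 + g) * d⁄dX ℚ (L g N) =
      (1 - C ((-1) ^ N) * g ^ N) * d⁄dX ℚ g := by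
  induction N with
  | zero =>
      have : L g 0 = 0 := by simp [L]
      rw [this]; simp
  | succ N ih =>
      have hN : ((N + 1 : ℕ) : ℚ) ≠ 0 := Nat.cast_ne_zero.mpr (Nat.succ_ne_zero N)
      have hL : L g (N + 1) = L g N
          + C ((-1) ^ (N + 1 + 1) / ((N + 1 : ℕ) : ℚ)) * g ^ (N + 1) := by
        rw [L, Finset.sum_range_succ]; rfl
      have hdpow : d⁄dX ℚ (g ^ (N + 1)) = (N + 1) • (g ^ N * d⁄dX ℚ g) := by
        rw [Derivation.leibniz_pow]
        simp [smul_smul, mul_comm, smul_eq_mul, Nat.succ_sub_one]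
      have hcancel : C ((-1) ^ (N + 1 + 1) / ((N + 1 : ℕ) : ℚ)) * ((N + 1 : ℕ) : ℚ⟦X⟧)
          = C ((-1) ^ N) := by
        rw [← map_natCast (C (R := ℚ)) (N + 1), ← map_mul]
        congr 1
        rw [div_mul_cancel₀ _ hN, pow_succ, pow_succ]
        ring
      have hterm : d⁄dX ℚ (C ((-1) ^ (N + 1 + 1) / ((N + 1 : ℕ) : ℚ)) * g ^ (N + 1))
          = C ((-1) ^ N) * (g ^ N * d⁄dX ℚ g) := by
        calc d⁄dX ℚ (C ((-1) ^ (N + 1 + 1) / ((N + 1 : ℕ) : ℚ)) * g ^ (N + 1))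
            = C ((-1) ^ (N + 1 + 1) / ((N + 1 : ℕ) : ℚ)) * d⁄dX ℚ (g ^ (N + 1)) := by
              rw [Derivation.leibniz, derivative_C, smul_zero, add_zero, smul_eq_mul]
          _ = C ((-1) ^ (N + 1 + 1) / ((N + 1 : ℕ) : ℚ))
                * (((N + 1 : ℕ) : ℚ⟦X⟧) * (g ^ N * d⁄dX ℚ g)) := by
              rw [hdpow, nsmul_eq_mul]
          _ = (C ((-1) ^ (N + 1 + 1) / ((N + 1 : ℕ) : ℚ)) * ((N + 1 : ℕ) : ℚ⟦X⟧))
                * (g ^ N * d⁄dX ℚ g) := by ring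
          _ = C ((-1) ^ N) * (g ^ N * d⁄dX ℚ g) := by rw [hcancel]
      have hsign : (C ((-1) ^ (N + 1)) : ℚ⟦X⟧) = - C ((-1) ^ N) := by
        rw [← map_neg]; congr 1; ring
      rw [hL, map_add, hterm, mul_add, ih, hsign, pow_succ]
      ring

/-- the fundamental differential equation for the formal logarithm -/
lemma mul_derivative_logS (f : ℚ⟦X⟧) (hf : constantCoeff f = 1) :
    f * d⁄dX ℚ (logS f) = d⁄dX ℚ f := by
  have hg : constantCoeff (f - 1) = 0 := by simp [hf]
  ext n
  have h1 : coeff n (f * d⁄dX ℚ (logS f)) = coeff n (f * d⁄dX ℚ (L (f - 1) (n + 1))) := by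
    rw [coeff_mul, coeff_mul]
    refine Finset.sum_congr rfl fun p hp => ?_
    rw [Finset.HasAntidiagonal.mem_antidiagonal] at hp
    rw [coeff_derivative, coeff_derivative, coeff_logS f hf (by omega : p.2 + 1 ≤ n + 1)]
  have hf1 : f = 1 + (f - 1) := by ring
  rw [h1]
  nth_rewrite 1 [hf1]
  rw [mul_derivative_L]
  have h2 : coeff n (C ((-1) ^ (n + 1)) * (f - 1) ^ (n + 1) * d⁄dX ℚ (f - 1)) = 0 := by
    have hX : (X : ℚ⟦X⟧) ^ (n + 1) ∣
        C ((-1) ^ (n + 1)) * (f - 1) ^ (n + 1) * d⁄dX ℚ (f - 1) := by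
      refine Dvd.dvd.mul_right (Dvd.dvd.mul_left ?_ _) _
      exact pow_dvd_pow_of_dvd (PowerSeries.X_dvd_iff.mpr hg) _
    exact (PowerSeries.X_pow_dvd_iff.mp hX) n (by omega)
  have h3 : d⁄dX ℚ (f - 1) = d⁄dX ℚ f := by rw [map_sub]; simp
  rw [sub_mul, one_mul, map_sub, h2, h3, sub_zero]

lemma constantCoeff_logS (f : ℚ⟦X⟧) : constantCoeff (logS f) = 0 := by
  rw [← coeff_zero_eq_constantCoeff_apply, logS, coeff_mk]
  simp

end LogSinhAux

section Main

open PowerSeries LogSinhAux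

noncomputable def Fs : ℚ⟦X⟧ :=
  PowerSeries.mk fun n => if n % 2 = 0 then (1 : ℚ) / (2 ^ n * (n + 1).factorial) else 0

noncomputable def Rs : ℚ⟦X⟧ :=
  PowerSeries.mk fun n => if 2 ≤ n then bernoulli n / n / n.factorial else 0

noncomputable def Ep : ℚ⟦X⟧ := rescale (1/2 : ℚ) (PowerSeries.exp ℚ)
noncomputable def Em : ℚ⟦X⟧ := rescale (-(1/2) : ℚ) (PowerSeries.exp ℚ)

lemma coeff_Ep (n : ℕ) : coeff n Ep = (1/2 : ℚ) ^ n / n.factorial := by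
  rw [Ep, coeff_rescale, coeff_exp]
  simp [div_eq_mul_inv]

lemma coeff_Em (n : ℕ) : coeff n Em = (-(1/2) : ℚ) ^ n / n.factorial := by
  rw [Em, coeff_rescale, coeff_exp]
  simp [div_eq_mul_inv]

lemma EpEm : Ep * Em = 1 := by
  rw [Ep, Em, PowerSeries.exp_mul_exp_eq_exp_add]
  norm_num [rescale_zero]

lemma EpEp : Ep * Ep = PowerSeries.exp ℚ := by
  rw [Ep, PowerSeries.exp_mul_exp_eq_exp_add]
  norm_num [rescale_one]

lemma X_mul_Fs : (X : ℚ⟦X⟧) * Fs = Ep - Em := by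
  ext n
  rw [map_sub, coeff_Ep, coeff_Em]
  cases n with
  | zero => simp
  | succ m =>
      rw [coeff_succ_X_mul, Fs, coeff_mk]
      rcases Nat.even_or_odd m with he | ho
      · have h1 : m % 2 = 0 := Nat.even_iff.mp he
        have h2 : Odd (m + 1) := Even.add_one he
        rw [if_pos h1, h2.neg_pow]
        have : ((2:ℚ)) ^ m ≠ 0 := by positivity
        have hf : ((m+1).factorial : ℚ) ≠ 0 := by positivity
        field_simp
        ring_nf; rw [← mul_pow]; norm_num
      · have h1 : ¬ (m % 2 = 0) := by simpa [Nat.odd_iff] using ho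
        have h2 : Even (m + 1) := Odd.add_one ho
        rw [if_neg h1, h2.neg_pow]
        ring

lemma derivative_Ep : d⁄dX ℚ Ep = C (1/2) * Ep := by
  ext n
  rw [coeff_derivative, coeff_C_mul, coeff_Ep, coeff_Ep]
  rw [Nat.factorial_succ]
  have h : ((n:ℚ) + 1) ≠ 0 := by positivity
  have hf : ((n).factorial : ℚ) ≠ 0 := by positivity
  push_cast
  field_simp
  ring

lemma derivative_Em : d⁄dX ℚ Em = C (-(1/2)) * Em := by
  ext n
  rw [coeff_derivative, coeff_C_mul, coeff_Em, coeff_Em]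
  rw [Nat.factorial_succ]
  have h : ((n:ℚ) + 1) ≠ 0 := by positivity
  have hf : ((n).factorial : ℚ) ≠ 0 := by positivity
  push_cast
  field_simp
  ring

lemma X_mul_DRs : (X : ℚ⟦X⟧) * d⁄dX ℚ Rs
    = bernoulliPowerSeries ℚ - 1 + C (1/2) * X := by
  ext n
  rw [map_add, map_sub, coeff_C_mul, bernoulliPowerSeries, coeff_mk]
  cases n with
  | zero => simp [Rs]
  | succ m =>
      rw [coeff_succ_X_mul, coeff_derivative, Rs, coeff_mk, coeff_one, coeff_X]
      cases m with
      | zero =>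
          norm_num [bernoulli_one]
      | succ p =>
          rw [if_pos (by omega : 2 ≤ p + 1 + 1)]
          have h : ((p:ℚ) + 1 + 1) ≠ 0 := by positivity
          simp only [Nat.succ_ne_zero, if_false, if_neg (by omega : ¬ (p + 1 + 1 = 0)),
            if_neg (by omega : ¬ (p + 1 + 1 = 1))]
          push_cast
          field_simp
          ring_nf; simp

lemma bern_Ep_Em : bernoulliPowerSeries ℚ * (Ep - Em) = X * Em := by
  have hEp : Ep ≠ 0 := by
    intro h
    have h0 := coeff_Ep 0
    rw [h, map_zero] at h0
    norm_num at h0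
  have key : (bernoulliPowerSeries ℚ * (Ep - Em)) * Ep = (X * Em) * Ep := by
    have h1 : (Ep - Em) * Ep = PowerSeries.exp ℚ - 1 := by
      rw [sub_mul, mul_comm Em Ep, EpEm, EpEp]
    calc (bernoulliPowerSeries ℚ * (Ep - Em)) * Ep
        = bernoulliPowerSeries ℚ * ((Ep - Em) * Ep) := by ring
      _ = bernoulliPowerSeries ℚ * (PowerSeries.exp ℚ - 1) := by rw [h1]
      _ = X := bernoulliPowerSeries_mul_exp_sub_one ℚ
      _ = X * (Em * Ep) := by rw [mul_comm Em Ep, EpEm, mul_one]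
      _ = (X * Em) * Ep := by ring
  exact mul_right_cancel₀ hEp key

lemma Fs_diff_eq : Fs + X * d⁄dX ℚ Fs = C (1/2) * (Ep + Em) := by
  have h := congrArg (d⁄dX ℚ) X_mul_Fs
  rw [Derivation.leibniz, map_sub, derivative_Ep, derivative_Em, derivative_X] at h
  rw [smul_eq_mul, smul_eq_mul, mul_one] at h
  have hneg : (C (-(1/2)) : ℚ⟦X⟧) = - C (1/2) := by rw [← map_neg]
  linear_combination h - Em * hneg

lemma key_identity : Fs * d⁄dX ℚ Rs = d⁄dX ℚ Fs := by
  have hX2 : (X : ℚ⟦X⟧) ^ 2 ≠ 0 := pow_ne_zero 2 PowerSeries.X_ne_zero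
  apply mul_left_cancel₀ hX2
  have h1 := X_mul_Fs
  have h2 := X_mul_DRs
  have h6 := bern_Ep_Em
  have h7 := Fs_diff_eq
  have hC : (C (1/2) : ℚ⟦X⟧) * 2 = 1 := by
    rw [show (2 : ℚ⟦X⟧) = C 2 from (map_ofNat (C (R := ℚ)) 2).symm, ← map_mul]
    norm_num
  linear_combination (X * d⁄dX ℚ Rs + 1) * h1 + (Ep - Em) * h2 + h6 - X * h7 - X * Em * hC

lemma constantCoeff_Fs : constantCoeff Fs = 1 := by
  rw [← coeff_zero_eq_constantCoeff_apply, Fs, coeff_mk]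
  norm_num

lemma Fs_ne_zero : Fs ≠ 0 := by
  intro h
  have h0 := constantCoeff_Fs
  rw [h, map_zero] at h0
  norm_num at h0

theorem logS_Fs_eq_Rs : logS Fs = Rs := by
  apply PowerSeries.derivative.ext
  · have h1 := mul_derivative_logS Fs constantCoeff_Fs
    have h2 := key_identity
    exact mul_left_cancel₀ Fs_ne_zero (h1.trans h2.symm)
  · rw [constantCoeff_logS, Rs, ← coeff_zero_eq_constantCoeff_apply, coeff_mk]
    norm_num

end Main

/-- `log(sinh(t/2)/(t/2)) = ∑_{n ≥ 2} (B_n/n) t^n/n!` as formal power series,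
where `sinh(t/2)/(t/2) = ∑_{m ≥ 0} (t/2)^{2m}/(2m+1)!` and `B_n` are the
Bernoulli numbers (with `B_1 = −1/2`). -/
theorem log_sinh_eq_bernoulli :
    logS (PowerSeries.mk fun n => if n % 2 = 0 then (1 : ℚ) / (2 ^ n * (n + 1).factorial) else 0) =
      PowerSeries.mk fun n => if 2 ≤ n then bernoulli n / n / n.factorial else 0 := by
  exact logS_Fs_eq_Rs
end

section
/- For every integer n ≥ 1, define V_n(x) = ∏_{1 ≤ k < n/2} (x^2 + 4 sin^2(πk/n)) (with V_1 = V_2 = 1). Then V_n(x) has integer coefficients. -/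
open Finset Polynomial Real

/-- `V_n(x) = ∏_{1 ≤ k < n/2} (x^2 + 4 sin²(πk/n))`, with `V_1 = V_2 = 1`. -/
noncomputable def V (n : ℕ) : Polynomial ℝ :=
  ∏ k ∈ (Finset.Ico 1 n).filter (fun k => 2 * k < n),
    (Polynomial.X ^ 2 + Polynomial.C (4 * Real.sin (Real.pi * k / n) ^ 2))

/-- `W_n(x) = ∏_{1 ≤ k < n/2, gcd(k,n)=1} (x^2 + 4 sin²(πk/n))`, with `W_1 = W_2 = 1`. -/
noncomputable def W (n : ℕ) : Polynomial ℝ :=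
  ∏ k ∈ (Finset.Ico 1 n).filter (fun k => 2 * k < n ∧ Nat.gcd k n = 1),
    (Polynomial.X ^ 2 + Polynomial.C (4 * Real.sin (Real.pi * k / n) ^ 2))

noncomputable def zz (x : ℝ) : ℝ := (x + Real.sqrt (x ^ 2 + 4)) / 2

noncomputable def qq (n : ℕ) (x : ℝ) : ℝ :=
  (zz x ^ (2 * n) - 1) / ((zz x ^ 2 - 1) * zz x ^ (n - 1))

noncomputable def tgt (n : ℕ) (x : ℝ) : ℝ :=
  if Odd n then qq n x else qq n x / (zz x + (zz x)⁻¹)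

noncomputable def pp : ℕ → Polynomial ℤ
  | 0 => 0
  | 1 => 1
  | 2 => 1
  | 3 => Polynomial.X ^ 2 + 3
  | (n + 4) => (Polynomial.X ^ 2 + 2) * pp (n + 2) - pp n

lemma zz_gt_one {x : ℝ} (hx : 0 < x) : 1 < zz x := by
  have h4 : (0:ℝ) < x ^ 2 + 4 := by positivity
  have hs : Real.sqrt (x ^ 2 + 4) ^ 2 = x ^ 2 + 4 := Real.sq_sqrt h4.le
  have hs0 : 0 ≤ Real.sqrt (x ^ 2 + 4) := Real.sqrt_nonneg _
  unfold zz
  nlinarith [sq_nonneg x, sq_nonneg (Real.sqrt (x ^ 2 + 4) - 2)]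

lemma zz_sub_inv {x : ℝ} (hx : 0 < x) : zz x - (zz x)⁻¹ = x := by
  have h4 : (0:ℝ) < x ^ 2 + 4 := by positivity
  have hs : Real.sqrt (x ^ 2 + 4) ^ 2 = x ^ 2 + 4 := Real.sq_sqrt h4.le
  have hmul : zz x * (zz x - x) = 1 := by unfold zz; linear_combination hs / 4
  have hinv : (zz x)⁻¹ = zz x - x := inv_eq_of_mul_eq_one_right hmul
  rw [hinv]; ring

lemma key_prod (n : ℕ) (hn : 0 < n) (w : ℝ) :
    (w - 1) ^ 2 * ∏ k ∈ Finset.Ico 1 n, (w ^ 2 - 2 * w * Real.cos (2 * π * k / n) + 1)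
      = (w ^ n - 1) ^ 2 := by
  have hnC : (n : ℂ) ≠ 0 := Nat.cast_ne_zero.2 hn.ne'
  set ω : ℂ := Complex.exp (2 * π * Complex.I / n) with hω
  have hprim : IsPrimitiveRoot ω n := Complex.isPrimitiveRoot_exp n hn.ne'
  -- product of (u - ω^i) over range n
  have hroots : ∀ u : ℂ, ∏ i ∈ Finset.range n, (u - ω ^ i) = u ^ n - 1 := by
    intro u
    classical
    have himg : Polynomial.nthRootsFinset n (1 : ℂ) = (Finset.range n).image (ω ^ ·) := by
      rw [Polynomial.nthRootsFinset_def, hprim.nthRoots_eq (one_pow n)]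
      simp only [mul_one]
      rw [Multiset.toFinset_map, ← Finset.range_val, Finset.val_toFinset]
    have h1 := congrArg (Polynomial.eval u) (Polynomial.X_pow_sub_one_eq_prod hn hprim)
    rw [himg, Finset.prod_image (fun i hi j hj h => hprim.injOn_pow
      (by simpa using hi) (by simpa using hj) h)] at h1
    simpa [Polynomial.eval_prod] using h1.symm
  -- each factor
  have hfac : ∀ k ∈ Finset.Ico 1 n,
      ((w : ℂ) ^ 2 - 2 * (w:ℂ) * Complex.cos (2 * (π:ℂ) * k / n) + 1)
        = ((w : ℂ) - ω ^ k) * ((w : ℂ) - ω ^ (n - k)) := by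
    intro k hk
    rw [Finset.mem_Ico] at hk
    set θ : ℝ := 2 * π * k / n with hθ
    have harg : ((θ : ℝ) : ℂ) = 2 * (π:ℂ) * k / n := by rw [hθ]; push_cast; ring
    rw [← harg]
    set e1 : ℂ := Complex.exp ((θ:ℂ) * Complex.I) with he1
    set e2 : ℂ := Complex.exp (-(θ:ℂ) * Complex.I) with he2
    have hek : ω ^ k = e1 := by
      rw [hω, ← Complex.exp_nat_mul, he1, harg]
      norm_num [hnC]
      ring_nf
    have hek' : ω ^ (n - k) = e2 := by
      rw [hω, ← Complex.exp_nat_mul, he2]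
      have hcast : ((n - k : ℕ) : ℂ) = (n : ℂ) - k := by
        push_cast [Nat.cast_sub hk.2.le]; ring
      rw [hcast, show ((n:ℂ) - k) * (2 * (π:ℂ) * Complex.I / n)
          = 2 * (π:ℂ) * Complex.I + -(θ:ℂ) * Complex.I by
        rw [neg_mul, harg]; field_simp; ring]
      rw [Complex.exp_add, Complex.exp_two_pi_mul_I, one_mul]
    have hsum : e1 + e2 = 2 * Complex.cos (θ:ℂ) := (Complex.two_cos _).symm
    have hmul : e1 * e2 = 1 := by
      rw [he1, he2, ← Complex.exp_add,
        show (θ:ℂ) * Complex.I + -(θ:ℂ) * Complex.I = 0 by ring, Complex.exp_zero]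
    rw [hek, hek']
    linear_combination (w:ℂ) * hsum - hmul
  -- assemble
  apply Complex.ofReal_injective
  push_cast
  have hcast2 : ∀ k ∈ Finset.Ico 1 n,
      ((w : ℂ) ^ 2 - 2 * (w:ℂ) * Complex.cos (2 * (π:ℂ) * k / n) + 1)
        = ((w : ℂ) - ω ^ k) * ((w : ℂ) - ω ^ (n - k)) := hfac
  rw [Finset.prod_congr rfl hcast2, Finset.prod_mul_distrib]
  have hswap : ∏ k ∈ Finset.Ico 1 n, ((w : ℂ) - ω ^ (n - k))
      = ∏ k ∈ Finset.Ico 1 n, ((w : ℂ) - ω ^ k) := by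
    apply Finset.prod_nbij' (fun k => n - k) (fun k => n - k)
    · intro a ha; rw [Finset.mem_Ico] at *; omega
    · intro a ha; rw [Finset.mem_Ico] at *; omega
    · intro a ha; rw [Finset.mem_Ico] at ha; omega
    · intro a ha; rw [Finset.mem_Ico] at ha; omega
    · intro a ha; rfl
  rw [hswap]
  have hbot : ∏ i ∈ Finset.range n, ((w : ℂ) - ω ^ i)
      = ((w : ℂ) - 1) * ∏ k ∈ Finset.Ico 1 n, ((w : ℂ) - ω ^ k) := by
    rw [Finset.range_eq_Ico, Finset.prod_eq_prod_Ico_succ_bot hn]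
    simp
  have hthis := hroots ((w : ℂ))
  rw [hbot] at hthis
  linear_combination ((w:ℂ)^n - 1 + ((w:ℂ)-1) * ∏ k ∈ Finset.Ico 1 n, ((w : ℂ) - ω ^ k)) * hthis


lemma zz_pos {x : ℝ} (hx : 0 < x) : 0 < zz x := lt_trans one_pos (zz_gt_one hx)

lemma zz_sq_sub_one {x : ℝ} (hx : 0 < x) : zz x ^ 2 - 1 ≠ 0 := by
  have := zz_gt_one hx; nlinarith

lemma zz_mul_x {x : ℝ} (hx : 0 < x) : zz x * x = zz x ^ 2 - 1 := by
  have hz0 : zz x ≠ 0 := (zz_pos hx).ne'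
  have hzz : zz x * (zz x)⁻¹ = 1 := mul_inv_cancel₀ hz0
  linear_combination (-(zz x)) * zz_sub_inv hx - hzz

lemma hx2' {x : ℝ} (hx : 0 < x) : (x ^ 2 + 2) * zz x ^ 2 = zz x ^ 4 + 1 := by
  linear_combination (zz x * x + zz x ^ 2 - 1) * zz_mul_x hx

lemma qq_pos {x : ℝ} (hx : 0 < x) (n : ℕ) (hn : 0 < n) : 0 < qq n x := by
  have hz1 : 1 < zz x := zz_gt_one hx
  have hz0 : 0 < zz x := zz_pos hx
  have h1 : 1 < zz x ^ (2 * n) := one_lt_pow₀ hz1 (by omega)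
  have h2 : 0 < zz x ^ 2 - 1 := by nlinarith
  have h3 : 0 < zz x ^ (n - 1) := pow_pos hz0 _
  unfold qq
  exact div_pos (by linarith) (mul_pos h2 h3)

lemma prod_sin (n : ℕ) (hn : 0 < n) (x : ℝ) (hx : 0 < x) :
    ∏ k ∈ Finset.Ico 1 n, (x ^ 2 + 4 * Real.sin (π * k / n) ^ 2) = qq n x ^ 2 := by
  have hz1 : 1 < zz x := zz_gt_one hx
  have hz0 : (0:ℝ) < zz x := zz_pos hx
  have hzx := zz_mul_x hx
  have hd1 := zz_sq_sub_one hx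
  have hsin : ∀ θ : ℝ, 4 * Real.sin θ ^ 2 = 2 - 2 * Real.cos (2 * θ) := by
    intro θ
    have h1 := Real.cos_two_mul' θ
    have h2 := Real.sin_sq_add_cos_sq θ
    linarith
  have hfac : ∀ k ∈ Finset.Ico 1 n,
      ((zz x ^ 2) ^ 2 - 2 * (zz x ^ 2) * Real.cos (2 * π * k / n) + 1)
        = zz x ^ 2 * (x ^ 2 + 4 * Real.sin (π * k / n) ^ 2) := by
    intro k _
    have e1 : (2 : ℝ) * (π * k / n) = 2 * π * k / n := by ring
    have e2 := hsin (π * k / n)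
    rw [e1] at e2
    rw [e2]
    linear_combination (-(zz x ^ 2 - 1) - zz x * x) * hzx
  have hk := key_prod n hn (zz x ^ 2)
  rw [Finset.prod_congr rfl hfac, Finset.prod_mul_distrib, Finset.prod_const,
    Nat.card_Ico] at hk
  unfold qq
  rw [div_pow, eq_div_iff (pow_ne_zero _ (mul_ne_zero hd1 (pow_ne_zero _ hz0.ne')))]
  linear_combination hk

lemma qq_rec (m : ℕ) (x : ℝ) (hx : 0 < x) :
    qq (m + 5) x = (x ^ 2 + 2) * qq (m + 3) x - qq (m + 1) x := by
  have hz0 : zz x ≠ 0 := (zz_pos hx).ne'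
  have hd1 := zz_sq_sub_one hx
  have hx2'' : x ^ 2 + 2 = (zz x ^ 4 + 1) / zz x ^ 2 := by
    rw [eq_div_iff (pow_ne_zero 2 hz0)]
    exact hx2' hx
  rw [hx2'']
  unfold qq
  simp only [show m + 5 - 1 = m + 4 from rfl, show m + 3 - 1 = m + 2 from rfl,
    show m + 1 - 1 = m from rfl]
  field_simp
  ring

lemma tgt_rec (m : ℕ) (x : ℝ) (hx : 0 < x) :
    tgt (m + 5) x = (x ^ 2 + 2) * tgt (m + 3) x - tgt (m + 1) x := by
  have h5 : Odd (m + 5) ↔ Odd (m + 1) := by simp [Nat.odd_iff]; omega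
  have h3 : Odd (m + 3) ↔ Odd (m + 1) := by simp [Nat.odd_iff]; omega
  unfold tgt
  by_cases h : Odd (m + 1)
  · rw [if_pos (h5.mpr h), if_pos (h3.mpr h), if_pos h, qq_rec m x hx]
  · rw [if_neg (fun hh => h (h5.mp hh)), if_neg (fun hh => h (h3.mp hh)), if_neg h,
      qq_rec m x hx]
    ring

lemma eval_pp (x : ℝ) (hx : 0 < x) :
    ∀ n, Polynomial.eval x ((pp n).map (Int.castRingHom ℝ)) = tgt n x := by
  have hz1 : 1 < zz x := zz_gt_one hx
  have hz0 : zz x ≠ 0 := (zz_pos hx).ne'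
  have hd1 := zz_sq_sub_one hx
  have hc : zz x + (zz x)⁻¹ ≠ 0 := by positivity
  have hzz : zz x * (zz x)⁻¹ = 1 := mul_inv_cancel₀ hz0
  have h2 := hx2' hx
  intro n
  induction n using Nat.strong_induction_on with
  | _ n ih =>
    match n with
    | 0 => simp [pp, tgt, qq]
    | 1 =>
      simp [pp, tgt, qq, Nat.odd_iff]
      field_simp
    | 2 =>
      simp [pp, tgt, qq, Nat.odd_iff]
      field_simp
      ring
    | 3 =>
      have h3 : tgt 3 x = qq 3 x := by simp [tgt, Nat.odd_iff]
      have h3' : Polynomial.eval x ((pp 3).map (Int.castRingHom ℝ)) = x ^ 2 + 3 := by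
        simp [pp]
      rw [h3, h3']
      unfold qq
      rw [eq_div_iff (mul_ne_zero hd1 (pow_ne_zero _ hz0))]
      linear_combination (zz x ^ 2 - 1) * h2
    | 4 =>
      have h4 : tgt 4 x = qq 4 x / (zz x + (zz x)⁻¹) := by simp [tgt, Nat.odd_iff]
      have h4' : Polynomial.eval x ((pp 4).map (Int.castRingHom ℝ)) = x ^ 2 + 2 := by
        have : pp 4 = Polynomial.X ^ 2 + 2 := by
          show (Polynomial.X ^ 2 + 2) * pp 2 - pp 0 = Polynomial.X ^ 2 + 2
          show (Polynomial.X ^ 2 + 2) * 1 - 0 = Polynomial.X ^ 2 + 2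
          ring
        rw [this]
        simp
      rw [h4, h4']
      unfold qq
      rw [div_div, eq_div_iff (mul_ne_zero (mul_ne_zero hd1 (pow_ne_zero _ hz0)) hc)]
      linear_combination ((zz x ^ 2 - 1) * (zz x ^ 2 + zz x * (zz x)⁻¹)) * h2
        + ((zz x ^ 4 + 1) * (zz x ^ 2 - 1)) * hzz
    | (m + 5) =>
      have e1 := ih (m + 3) (by omega)
      have e2 := ih (m + 1) (by omega)
      have hpp : pp (m + 5) = (Polynomial.X ^ 2 + 2) * pp (m + 3) - pp (m + 1) := rfl
      rw [hpp, tgt_rec m x hx, ← e1, ← e2]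
      simp [Polynomial.map_sub, Polynomial.map_mul, Polynomial.map_add, Polynomial.map_pow]

lemma eval_V (n : ℕ) (hn : 1 ≤ n) (x : ℝ) (hx : 0 < x) :
    Polynomial.eval x (V n) = tgt n x := by
  have hz1 : 1 < zz x := zz_gt_one hx
  have hz0 : (0:ℝ) < zz x := zz_pos hx
  have hzz : zz x * (zz x)⁻¹ = 1 := mul_inv_cancel₀ hz0.ne'
  have hn0 : (n : ℝ) ≠ 0 := Nat.cast_ne_zero.2 (by omega)
  have hqpos : 0 < qq n x := qq_pos hx n (by omega)
  set f : ℕ → ℝ := fun k => x ^ 2 + 4 * Real.sin (π * k / n) ^ 2 with hf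
  have hfpos : ∀ k, 0 < f k := by
    intro k
    have h1 : (0:ℝ) ≤ 4 * Real.sin (π * k / n) ^ 2 := by positivity
    have h2 : (0:ℝ) < x ^ 2 := by positivity
    simp only [hf]
    linarith
  have hA : Polynomial.eval x (V n)
      = ∏ k ∈ (Finset.Ico 1 n).filter (fun k => 2 * k < n), f k := by
    unfold V
    rw [Polynomial.eval_prod]
    simp [hf]
  set A := ∏ k ∈ (Finset.Ico 1 n).filter (fun k => 2 * k < n), f k with hAdef
  have hApos : 0 < A := Finset.prod_pos (fun k _ => hfpos k)
  have hfsym : ∀ k, k ≤ n → f (n - k) = f k := by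
    intro k hk
    have hcast : ((n - k : ℕ) : ℝ) = (n : ℝ) - k := by
      push_cast [Nat.cast_sub hk]; ring
    have harg : π * ((n:ℝ) - k) / n = π - π * k / n := by
      field_simp
    simp only [hf, hcast, harg, Real.sin_pi_sub]
  have hsplit1 := Finset.prod_filter_mul_prod_filter_not (Finset.Ico 1 n)
    (fun k => 2 * k < n) f
  have hsplit2 := Finset.prod_filter_mul_prod_filter_not
    ((Finset.Ico 1 n).filter (fun k => ¬ 2 * k < n)) (fun k => 2 * k = n) f
  have hC : ∏ k ∈ ((Finset.Ico 1 n).filter (fun k => ¬ 2 * k < n)).filter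
      (fun k => ¬ 2 * k = n), f k = A := by
    rw [hAdef]
    apply Finset.prod_nbij' (fun k => n - k) (fun k => n - k)
    · intro a ha
      simp only [Finset.mem_filter, Finset.mem_Ico] at *
      omega
    · intro a ha
      simp only [Finset.mem_filter, Finset.mem_Ico] at *
      omega
    · intro a ha
      simp only [Finset.mem_filter, Finset.mem_Ico] at ha
      omega
    · intro a ha
      simp only [Finset.mem_filter, Finset.mem_Ico] at ha
      omega
    · intro a ha
      simp only [Finset.mem_filter, Finset.mem_Ico] at ha
      exact (hfsym a (by omega)).symm
  have hsin_prod := prod_sin n (by omega) x hx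
  have htot : (∏ k ∈ Finset.Ico 1 n, f k) = qq n x ^ 2 := hsin_prod
  rcases Nat.even_or_odd n with he | ho
  · -- even case
    obtain ⟨m, hm⟩ := he
    have hm1 : 1 ≤ m := by omega
    have hBset : ((Finset.Ico 1 n).filter (fun k => ¬ 2 * k < n)).filter
        (fun k => 2 * k = n) = {m} := by
      ext k
      simp only [Finset.mem_filter, Finset.mem_Ico, Finset.mem_singleton]
      omega
    have hfm : f m = x ^ 2 + 4 := by
      have hm0 : (m : ℝ) ≠ 0 := Nat.cast_ne_zero.2 (by omega)
      have harg : π * (m:ℝ) / (n:ℝ) = π / 2 := by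
        rw [hm]
        push_cast
        field_simp
        ring
      simp only [hf, harg, Real.sin_pi_div_two]
      norm_num
    have hB : ∏ k ∈ ((Finset.Ico 1 n).filter (fun k => ¬ 2 * k < n)).filter
        (fun k => 2 * k = n), f k = x ^ 2 + 4 := by
      rw [hBset, Finset.prod_singleton, hfm]
    have hcomb : A ^ 2 * (x ^ 2 + 4) = qq n x ^ 2 := by
      rw [← htot, ← hsplit1, ← hsplit2, hB, hC]
      ring
    have hcpos : 0 < zz x + (zz x)⁻¹ := by positivity
    have hc2 : (zz x + (zz x)⁻¹) ^ 2 = x ^ 2 + 4 := by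
      linear_combination (zz x - (zz x)⁻¹ + x) * zz_sub_inv hx + 4 * hzz
    have hsq : (A * (zz x + (zz x)⁻¹)) ^ 2 = qq n x ^ 2 := by
      rw [mul_pow, hc2]
      exact hcomb
    have hAc : A * (zz x + (zz x)⁻¹) = qq n x := by
      have := congrArg Real.sqrt hsq
      rwa [Real.sqrt_sq (by positivity), Real.sqrt_sq hqpos.le] at this
    have hodd : ¬ Odd n := by
      rw [Nat.odd_iff]
      omega
    rw [hA]
    unfold tgt
    rw [if_neg hodd, eq_div_iff hcpos.ne']
    exact hAc
  · -- odd case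
    have hBempty : ((Finset.Ico 1 n).filter (fun k => ¬ 2 * k < n)).filter
        (fun k => 2 * k = n) = ∅ := by
      apply Finset.filter_eq_empty_iff.2
      intro k hk
      rcases ho with ⟨t, ht⟩
      omega
    have hcomb : A ^ 2 = qq n x ^ 2 := by
      rw [← htot, ← hsplit1, ← hsplit2, hBempty, hC]
      simp
      ring
    have hAq : A = qq n x := by
      have := congrArg Real.sqrt hcomb
      rwa [Real.sqrt_sq hApos.le, Real.sqrt_sq hqpos.le] at this
    rw [hA]
    unfold tgt
    rw [if_pos ho]
    exact hAq

/-- For every `n ≥ 1`, the polynomial `V_n` has integer coefficients. -/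
theorem V_int_coeffs (n : ℕ) (hn : 1 ≤ n) :
    ∃ p : Polynomial ℤ, p.map (Int.castRingHom ℝ) = V n := by
  refine ⟨pp n, ?_⟩
  apply Polynomial.eq_of_infinite_eval_eq
  apply Set.Infinite.mono _ (Set.Ioi_infinite (0:ℝ))
  intro y hy
  have hy' : (0:ℝ) < y := hy
  simp only [Set.mem_setOf_eq]
  rw [eval_pp y hy' n, eval_V n hn y hy']
end

section
/- For an odd integer n ≥ 1, V_n(x) = Σ_{m=0}^{(n−1)/2} [n(n−m−1)!/(m!(n−2m)!)] x^{n−2m−1}, and for an even integer n ≥ 2, V_n(x) = Σ_{m=0}^{n/2−1} C(n−m−1, m) x^{n−2m−2}. -/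
open Finset Polynomial Real

lemma prod_roots (n : ℕ) (hn : 1 ≤ n) (z : ℂ) :
    z ^ (2*n) - 1 = ∏ k ∈ Finset.range (2*n), (z - Complex.exp (↑Real.pi * Complex.I / n) ^ k) := by
  have h2n : (2*n) ≠ 0 := by omega
  have hprim : IsPrimitiveRoot (Complex.exp (↑Real.pi * Complex.I / n)) (2*n) := by
    have := Complex.isPrimitiveRoot_exp (2*n) h2n
    convert this using 2
    push_cast
    have : (n:ℂ) ≠ 0 := by exact_mod_cast Nat.cast_ne_zero.mpr (by omega)
    field_simp
  have himg : Polynomial.nthRootsFinset (2*n) (1 : ℂ)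
      = Finset.image (fun i => Complex.exp (↑Real.pi * Complex.I / n) ^ i) (Finset.range (2*n)) := by
    symm
    apply Finset.eq_of_subset_of_card_le
    · intro x hx
      obtain ⟨i, hi, rfl⟩ := Finset.mem_image.mp hx
      exact (Polynomial.mem_nthRootsFinset (by omega) 1).mpr (by
        rw [← pow_mul, mul_comm i, pow_mul, hprim.pow_eq_one, one_pow])
    · rw [hprim.card_nthRootsFinset, Finset.card_image_of_injOn, Finset.card_range]
      intro a ha b hb hab
      exact hprim.pow_inj (Finset.mem_range.mp ha) (Finset.mem_range.mp hb) hab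
  have := Polynomial.X_pow_sub_one_eq_prod (R := ℂ) (by omega : 0 < 2*n) hprim
  have := congrArg (Polynomial.eval z) this
  simp only [Polynomial.eval_sub, Polynomial.eval_pow, Polynomial.eval_X, Polynomial.eval_one,
    Polynomial.eval_prod, Polynomial.eval_sub, Polynomial.eval_C] at this
  rw [this, himg, Finset.prod_image]
  intro a ha b hb hab
  exact hprim.pow_inj (Finset.mem_range.mp ha) (Finset.mem_range.mp hb) hab



lemma key_complex (n : ℕ) (hn : 1 ≤ n) (z : ℂ) (hz : z ≠ 0) :
    z ^ n - z⁻¹ ^ n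
      = (z - z⁻¹) * ∏ k ∈ Finset.Ico 1 n, (z + z⁻¹ - 2 * Real.cos (Real.pi * k / n)) := by
  have hnC : (n:ℂ) ≠ 0 := Nat.cast_ne_zero.mpr (by omega)
  set ζ : ℂ := Complex.exp (↑Real.pi * Complex.I / n) with hζ
  have hζk : ∀ k : ℕ, ζ ^ k = Complex.exp (k * (↑Real.pi * Complex.I / n)) := by
    intro k; rw [← Complex.exp_nat_mul]
  have hpair : ∀ k ∈ Finset.Ico 1 n,
      (z - ζ ^ k) * (z - ζ ^ (2*n - k)) = z * (z + z⁻¹ - 2 * Real.cos (Real.pi * k / n)) := by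
    intro k hk
    rw [Finset.mem_Ico] at hk
    have hkexp : ζ ^ (2*n - k) = Complex.exp (-(k * (↑Real.pi * Complex.I / n))) := by
      rw [hζk]
      rw [show ((2*n - k : ℕ) : ℂ) = 2*n - k by push_cast [Nat.cast_sub (by omega : k ≤ 2*n)]; ring]
      rw [show (2*(n:ℂ) - k) * (↑Real.pi * Complex.I / n)
           = 2*Real.pi*Complex.I + -(k * (↑Real.pi * Complex.I / n)) by field_simp; ring]
      rw [Complex.exp_add, Complex.exp_two_pi_mul_I, one_mul]
    have hsum : ζ ^ k + ζ ^ (2*n - k) = 2 * Real.cos (Real.pi * k / n) := by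
      rw [hζk, hkexp]
      rw [show (k : ℂ) * (↑Real.pi * Complex.I / n) = ((Real.pi * k / n : ℝ) : ℂ) * Complex.I by
        push_cast; field_simp]
      rw [Complex.exp_mul_I, ← neg_mul, Complex.exp_mul_I, Complex.cos_neg, Complex.sin_neg]
      push_cast [Complex.ofReal_cos]
      ring
    have hprod : ζ ^ k * ζ ^ (2*n - k) = 1 := by
      rw [← pow_add, show k + (2*n - k) = 2*n by omega, hζk]
      rw [show ((2*n : ℕ) : ℂ) * (↑Real.pi * Complex.I / n) = 2*Real.pi*Complex.I by
        push_cast; field_simp]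
      exact Complex.exp_two_pi_mul_I
    have : (z - ζ ^ k) * (z - ζ ^ (2*n - k))
        = z*z - (ζ ^ k + ζ ^ (2*n-k)) * z + ζ ^ k * ζ ^ (2*n-k) := by ring
    rw [this, hsum, hprod]
    field_simp
    ring
  -- split the range product
  have hre := prod_roots n hn z
  rw [← hζ] at hre
  have hζn : ζ ^ n = -1 := by
    rw [hζk, show ((n:ℕ):ℂ) * (↑Real.pi * Complex.I / n) = ↑Real.pi * Complex.I by field_simp]
    exact Complex.exp_pi_mul_I
  have hζ0 : ζ ^ 0 = 1 := pow_zero ζ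
  have hsplit : Finset.range (2*n)
      = ({0} ∪ Finset.Ico 1 n) ∪ ({n} ∪ Finset.Ico (n+1) (2*n)) := by
    ext k
    simp only [Finset.mem_range, Finset.mem_union, Finset.mem_singleton, Finset.mem_Ico]
    omega
  have hd1 : Disjoint ({0} ∪ Finset.Ico 1 n) ({n} ∪ Finset.Ico (n+1) (2*n)) := by
    rw [Finset.disjoint_left]
    intro a
    simp only [Finset.mem_union, Finset.mem_singleton, Finset.mem_Ico]
    omega
  have hd2 : Disjoint ({0} : Finset ℕ) (Finset.Ico 1 n) := by
    rw [Finset.disjoint_left]; intro a; simp only [Finset.mem_singleton, Finset.mem_Ico]; omega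
  have hd3 : Disjoint ({n} : Finset ℕ) (Finset.Ico (n+1) (2*n)) := by
    rw [Finset.disjoint_left]; intro a; simp only [Finset.mem_singleton, Finset.mem_Ico]; omega
  rw [hsplit, Finset.prod_union hd1, Finset.prod_union hd2, Finset.prod_union hd3] at hre
  simp only [Finset.prod_singleton, hζ0, hζn] at hre
  -- reindex the upper product
  have hrei : ∏ k ∈ Finset.Ico (n+1) (2*n), (z - ζ ^ k)
      = ∏ k ∈ Finset.Ico 1 n, (z - ζ ^ (2*n - k)) := by
    apply Finset.prod_nbij' (fun k => 2*n - k) (fun k => 2*n - k)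
    · intro a ha; rw [Finset.mem_Ico] at *; omega
    · intro a ha; rw [Finset.mem_Ico] at *; omega
    · intro a ha; rw [Finset.mem_Ico] at ha; omega
    · intro a ha; rw [Finset.mem_Ico] at ha; omega
    · intro a ha; rw [Finset.mem_Ico] at ha
      congr 2
      omega
  rw [hrei] at hre
  have hre2 : z^(2*n) - 1 = (z-1)*(z - -1) * ∏ k ∈ Finset.Ico 1 n,
      ((z - ζ^k)*(z - ζ^(2*n-k))) := by
    rw [hre, Finset.prod_mul_distrib]; ring
  rw [Finset.prod_congr rfl hpair, Finset.prod_mul_distrib, Finset.prod_const,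
    Nat.card_Ico] at hre2
  -- now hre : z^(2n) - 1 = (z-1)*((z - -1) * (z^(n-1) * P))
  set P := ∏ k ∈ Finset.Ico 1 n, (z + z⁻¹ - 2 * (Real.cos (Real.pi * k / n) : ℂ)) with hP
  have hzn : z ^ n ≠ 0 := pow_ne_zero _ hz
  apply mul_left_cancel₀ hzn
  have e1 : z ^ n * (z ^ n - z⁻¹ ^ n) = z^(2*n) - 1 := by
    have : z ^ n * z⁻¹ ^ n = 1 := by
      rw [← mul_pow, mul_inv_cancel₀ hz, one_pow]
    rw [mul_sub, this, ← pow_add]; ring_nf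
  have e2 : z ^ n * ((z - z⁻¹) * P) = (z - 1) * ((z - -1) * (z ^ (n-1) * P)) := by
    have hn1 : z ^ n = z * z ^ (n-1) := by
      rw [← pow_succ']
      congr 1
      omega
    have : z * (z - z⁻¹) = (z-1)*(z - -1) := by field_simp; ring
    calc z ^ n * ((z - z⁻¹) * P) = (z * (z - z⁻¹)) * (z ^ (n-1) * P) := by rw [hn1]; ring
    _ = (z - 1) * ((z - -1) * (z ^ (n-1) * P)) := by rw [this]; ring
  rw [e1, e2, hre2]; ring

lemma key_real (n : ℕ) (hn : 1 ≤ n) (t : ℝ) :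
    Real.exp (n*t) - Real.exp (-(n*t))
      = (Real.exp t - Real.exp (-t)) * ∏ k ∈ Finset.Ico 1 n,
          (Real.exp t + Real.exp (-t) - 2 * Real.cos (Real.pi * k / n)) := by
  have hz : ((Real.exp t : ℝ) : ℂ) ≠ 0 := by
    exact_mod_cast (Real.exp_pos t).ne'
  have h := key_complex n hn ((Real.exp t : ℝ) : ℂ) hz
  have hinv : (((Real.exp t : ℝ) : ℂ))⁻¹ = ((Real.exp (-t) : ℝ) : ℂ) := by
    rw [← Complex.ofReal_inv, Real.exp_neg]
  rw [hinv] at h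
  rw [← Complex.ofReal_pow, ← Complex.ofReal_pow, ← Real.exp_nat_mul, ← Real.exp_nat_mul,
    show (n:ℝ) * (-t) = -((n:ℝ)*t) by ring] at h
  apply Complex.ofReal_inj.mp
  rw [Complex.ofReal_sub, Complex.ofReal_mul, Complex.ofReal_sub, Complex.ofReal_prod, h]
  congr 1
  apply Finset.prod_congr rfl
  intro k hk
  simp only [Complex.ofReal_sub, Complex.ofReal_add, Complex.ofReal_mul, Complex.ofReal_ofNat]

lemma pair_prod (n : ℕ) (hn : 1 ≤ n) (x a : ℝ) (ha : a^2 = x^2 + 4) :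
    ∏ k ∈ Finset.Ico 1 n, (a - 2 * Real.cos (Real.pi * k / n))
      = (if Even n then a else 1) * ∏ k ∈ (Finset.Ico 1 n).filter (fun k => 2*k < n),
          (x^2 + 4 * Real.sin (Real.pi * k / n)^2) := by
  classical
  have hnR : (n:ℝ) ≠ 0 := Nat.cast_ne_zero.mpr (by omega)
  set A := (Finset.Ico 1 n).filter (fun k => 2*k < n) with hA
  set M := (Finset.Ico 1 n).filter (fun k => 2*k = n) with hM
  set B := (Finset.Ico 1 n).filter (fun k => n < 2*k) with hB
  have hsplit : Finset.Ico 1 n = (A ∪ M) ∪ B := by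
    ext k
    simp only [hA, hM, hB, Finset.mem_union, Finset.mem_filter, Finset.mem_Ico]
    omega
  have hd1 : Disjoint (A ∪ M) B := by
    rw [Finset.disjoint_left]
    intro k
    simp only [hA, hM, hB, Finset.mem_union, Finset.mem_filter, Finset.mem_Ico]
    omega
  have hd2 : Disjoint A M := by
    rw [Finset.disjoint_left]
    intro k
    simp only [hA, hM, Finset.mem_filter, Finset.mem_Ico]
    omega
  have hBA : ∏ k ∈ B, (a - 2 * Real.cos (Real.pi * k / n)) = ∏ k ∈ A, (a + 2 * Real.cos (Real.pi * k / n)) := by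
    apply Finset.prod_nbij' (fun k => n - k) (fun k => n - k)
    · intro k hk; simp only [hA, hB, Finset.mem_filter, Finset.mem_Ico] at *; omega
    · intro k hk; simp only [hA, hB, Finset.mem_filter, Finset.mem_Ico] at *; omega
    · intro k hk; simp only [hB, Finset.mem_filter, Finset.mem_Ico] at hk; omega
    · intro k hk; simp only [hA, Finset.mem_filter, Finset.mem_Ico] at hk; omega
    · intro k hk
      simp only [hB, Finset.mem_filter, Finset.mem_Ico] at hk
      rw [Nat.cast_sub (by omega : k ≤ n)]
      rw [show Real.pi * ((n:ℝ) - k) / n = Real.pi - Real.pi * k / n by field_simp]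
      rw [Real.cos_pi_sub]
      ring
  have hAB : (∏ k ∈ A, (a - 2 * Real.cos (Real.pi * k / n))) * ∏ k ∈ B, (a - 2 * Real.cos (Real.pi * k / n))
      = ∏ k ∈ A, (x^2 + 4 * Real.sin (Real.pi * k / n)^2) := by
    rw [hBA, ← Finset.prod_mul_distrib]
    apply Finset.prod_congr rfl
    intro k hk
    have := Real.sin_sq_add_cos_sq (Real.pi * k / n)
    nlinarith
  have hMval : ∏ k ∈ M, (a - 2 * Real.cos (Real.pi * k / n)) = if Even n then a else 1 := by
    by_cases he : Even n
    · obtain ⟨m, rfl⟩ := he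
      have hm : 1 ≤ m := by omega
      have : M = {m} := by
        ext k
        simp only [hM, Finset.mem_filter, Finset.mem_Ico, Finset.mem_singleton]
        omega
      rw [this, Finset.prod_singleton, if_pos ⟨m, rfl⟩]
      have : Real.pi * m / (↑(m+m)) = Real.pi / 2 := by
        push_cast
        field_simp
        ring
      rw [this, Real.cos_pi_div_two]
      ring
    · have : M = ∅ := by
        rw [hM, Finset.filter_eq_empty_iff]
        intro k hk hek
        exact he ⟨k, by omega⟩
      rw [this, Finset.prod_empty, if_neg he]
  rw [hsplit, Finset.prod_union hd1, Finset.prod_union hd2]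
  rw [mul_right_comm, hAB, hMval]
  ring

/-- value of the Fibonacci-type polynomial sum -/
noncomputable def sVal (n : ℕ) (x : ℝ) : ℝ :=
  ∑ m ∈ Finset.range n, ((n - 1 - m).choose m : ℝ) * x ^ (n - 1 - 2*m)

lemma choose_vanish {n m : ℕ} (hn : 1 ≤ n) (h : n ≤ 2*m) : (n - 1 - m).choose m = 0 :=
  Nat.choose_eq_zero_of_lt (by omega)

lemma sVal_rec (n : ℕ) (x : ℝ) : sVal (n+2) x = x * sVal (n+1) x + sVal n x := by
  rcases Nat.eq_zero_or_pos n with rfl | hn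
  · norm_num [sVal, Finset.sum_range_succ]
  have hL : sVal (n+2) x
      = x^(n+1) + ∑ m ∈ Finset.range (n+1),
          (((n - m).choose (m+1) : ℝ)) * x ^ (n - 1 - 2*m) := by
    rw [sVal, Finset.sum_range_succ']
    simp only [Nat.sub_zero, Nat.choose_zero_right, Nat.cast_one, one_mul, Nat.mul_zero]
    rw [add_comm]
    congr 1
    apply Finset.sum_congr rfl
    intro m hm
    rw [show n + 2 - 1 - (m+1) = n - m by omega, show n + 2 - 1 - 2*(m+1) = n - 1 - 2*m by omega]
  have hR1 : x * sVal (n+1) x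
      = ∑ m ∈ Finset.range (n+1), ((n - m).choose m : ℝ) * x ^ (n + 1 - 2*m) := by
    rw [sVal, Finset.mul_sum]
    apply Finset.sum_congr rfl
    intro m hm
    rw [show n + 1 - 1 - m = n - m by omega, show n + 1 - 1 - 2*m = n - 2*m by omega]
    by_cases h2 : 2*m ≤ n
    · rw [show n + 1 - 2*m = (n - 2*m) + 1 by omega, pow_succ]
      ring
    · have hv : (n - m).choose m = 0 := by
        have := choose_vanish (by omega : 1 ≤ n + 1) (by omega : n + 1 ≤ 2*m)
        rwa [show n + 1 - 1 - m = n - m by omega] at this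
      rw [hv]
      norm_num
  have hR1' : ∑ m ∈ Finset.range (n+1), ((n - m).choose m : ℝ) * x ^ (n + 1 - 2*m)
      = x^(n+1) + ∑ m ∈ Finset.range (n+1),
          (((n - 1 - m).choose (m+1) : ℝ)) * x ^ (n - 1 - 2*m) := by
    rw [Finset.sum_range_succ']
    simp only [Nat.sub_zero, Nat.choose_zero_right, Nat.cast_one, one_mul, Nat.mul_zero]
    rw [add_comm]
    congr 1
    rw [Finset.sum_range_succ,
      show n - 1 - n = 0 by omega, Nat.choose_eq_zero_of_lt (by omega : 0 < n + 1)]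
    push_cast
    rw [zero_mul, add_zero]
    apply Finset.sum_congr rfl
    intro m hm
    rw [show n - (m+1) = n - 1 - m by omega, show n + 1 - 2*(m+1) = n - 1 - 2*m by omega]
  have hR2 : sVal n x
      = ∑ m ∈ Finset.range (n+1), ((n - 1 - m).choose m : ℝ) * x ^ (n - 1 - 2*m) := by
    rw [sVal, Finset.sum_range_succ, choose_vanish hn (by omega)]
    push_cast
    rw [zero_mul, add_zero]
  rw [hL, hR1, hR1', hR2, add_assoc, ← Finset.sum_add_distrib]
  congr 1
  apply Finset.sum_congr rfl
  intro m hm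
  rw [← add_mul]
  congr 1
  by_cases hmn : m ≤ n - 1
  · rw [show n - m = (n - 1 - m) + 1 by omega]
    rw [Nat.choose_succ_succ]
    push_cast
    ring
  · rw [show n - m = 0 by omega, show n - 1 - m = 0 by omega,
      Nat.choose_eq_zero_of_lt (by omega : 0 < m + 1),
      Nat.choose_eq_zero_of_lt (by omega : 0 < m)]
    norm_num

lemma sVal_val (n : ℕ) (t : ℝ) :
    sVal n (Real.exp t - Real.exp (-t)) * (Real.exp t + Real.exp (-t))
      = Real.exp (n*t) - (-1)^n * Real.exp (-(n*t)) := by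
  induction n using Nat.twoStepInduction with
  | zero => norm_num [sVal]
  | one => norm_num [sVal]
  | more n ih2 ih1 =>
    rw [sVal_rec, add_mul, mul_assoc, ih1, ih2]
    have huv : Real.exp t * Real.exp (-t) = 1 := by
      rw [← Real.exp_add]; norm_num
    have e1 : Real.exp ((n+2:ℕ)*t) = Real.exp t * Real.exp t * Real.exp (n*t) := by
      rw [← Real.exp_add, ← Real.exp_add]; congr 1; push_cast; ring
    have e2 : Real.exp (-((n+2:ℕ)*t)) = Real.exp (-t) * Real.exp (-t) * Real.exp (-(n*t)) := by
      rw [← Real.exp_add, ← Real.exp_add]; congr 1; push_cast; ring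
    have e3 : Real.exp ((n+1:ℕ)*t) = Real.exp t * Real.exp (n*t) := by
      rw [← Real.exp_add]; congr 1; push_cast; ring
    have e4 : Real.exp (-((n+1:ℕ)*t)) = Real.exp (-t) * Real.exp (-(n*t)) := by
      rw [← Real.exp_add]; congr 1; push_cast; ring
    rw [e1, e2, e3, e4]
    push_cast
    linear_combination (-Real.exp (n*t) + (-1)^n * Real.exp (-(n*t))) * huv

-- nat coefficient identity
lemma lucas_coeff_nat (n m : ℕ) (hm : 1 ≤ m) (h : 2*m ≤ n - 1) (hn : 1 ≤ n) :
    n * (n - m - 1).factorial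
      = ((n-m).choose m + (n-m-1).choose (m-1)) * (m.factorial * (n - 2*m).factorial) := by
  have h1 : (n-m).choose m * m.factorial * (n - 2*m).factorial = (n-m).factorial := by
    have := Nat.choose_mul_factorial_mul_factorial (by omega : m ≤ n - m)
    rwa [show n - m - m = n - 2*m by omega] at this
  have h2 : (n-m-1).choose (m-1) * (m-1).factorial * (n - 2*m).factorial
      = (n-m-1).factorial := by
    have := Nat.choose_mul_factorial_mul_factorial (by omega : m - 1 ≤ n - m - 1)
    rwa [show n - m - 1 - (m-1) = n - 2*m by omega] at this
  have h3 : m.factorial = m * (m-1).factorial := by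
    rw [show m = (m-1) + 1 by omega, Nat.factorial_succ]
    simp
  have h4 : (n-m).factorial = (n-m) * (n-m-1).factorial := by
    rw [show n - m = (n-m-1) + 1 by omega, Nat.factorial_succ]
    simp
  calc n * (n - m - 1).factorial
      = (n - m) * (n-m-1).factorial + m * (n-m-1).factorial := by
        rw [← add_mul]; congr 1; omega
    _ = ((n-m).choose m + (n-m-1).choose (m-1)) * (m.factorial * (n - 2*m).factorial) := by
        rw [← h4, ← h1, ← h2, h3]; ring

lemma lucas_coeff_real (n m : ℕ) (hm : 1 ≤ m) (h : 2*m ≤ n - 1) (hn : 1 ≤ n) :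
    ((n : ℝ) * (n - m - 1).factorial) / ((m.factorial : ℝ) * (n - 2 * m).factorial)
      = ((n-m).choose m : ℝ) + ((n-m-1).choose (m-1) : ℝ) := by
  have hne : ((m.factorial : ℝ) * (n - 2 * m).factorial) ≠ 0 := by
    positivity
  rw [div_eq_iff hne]
  exact_mod_cast lucas_coeff_nat n m hm h hn

lemma lucas_coeff_zero (n : ℕ) (hn : 1 ≤ n) :
    ((n : ℝ) * (n - 0 - 1).factorial) / ((Nat.factorial 0 : ℝ) * (n - 2 * 0).factorial) = 1 := by
  simp only [Nat.sub_zero, Nat.mul_zero, Nat.factorial_zero, Nat.cast_one, one_mul]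
  rw [div_eq_one_iff_eq (by positivity)]
  have := Nat.mul_factorial_pred (n := n) (by omega)
  exact_mod_cast this

lemma V_eval_key (n : ℕ) (hn : 1 ≤ n) (t : ℝ) :
    Real.exp (n*t) - Real.exp (-(n*t))
      = (Real.exp t - Real.exp (-t)) * ((if Even n then (Real.exp t + Real.exp (-t)) else 1)
          * Polynomial.eval (Real.exp t - Real.exp (-t)) (V n)) := by
  have huv : Real.exp t * Real.exp (-t) = 1 := by
    rw [← Real.exp_add]; norm_num
  have ha : (Real.exp t + Real.exp (-t))^2 = (Real.exp t - Real.exp (-t))^2 + 4 := by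
    nlinarith [huv]
  have hev : Polynomial.eval (Real.exp t - Real.exp (-t)) (V n)
      = ∏ k ∈ (Finset.Ico 1 n).filter (fun k => 2*k < n),
          ((Real.exp t - Real.exp (-t))^2 + 4 * Real.sin (Real.pi * k / n)^2) := by
    rw [V, Polynomial.eval_prod]
    apply Finset.prod_congr rfl
    intro k hk
    simp
  rw [key_real n hn t, pair_prod n hn _ _ ha, hev]

/-- Explicit formulas for `V_n`: for odd `n`,
`V_n(x) = ∑_{m=0}^{(n−1)/2} [n(n−m−1)!/(m!(n−2m)!)] x^{n−2m−1}`, and for even `n`,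
`V_n(x) = ∑_{m=0}^{n/2−1} C(n−m−1, m) x^{n−2m−2}`. -/
theorem V_explicit (n : ℕ) (hn : 1 ≤ n) :
    (Odd n → V n = ∑ m ∈ Finset.range ((n - 1) / 2 + 1),
      Polynomial.C (((n : ℝ) * (n - m - 1).factorial) / ((m.factorial : ℝ) * (n - 2 * m).factorial))
        * Polynomial.X ^ (n - 2 * m - 1)) ∧
    (Even n → V n = ∑ m ∈ Finset.range (n / 2),
      Polynomial.C (((n - m - 1).choose m : ℝ)) * Polynomial.X ^ (n - 2 * m - 2)) := by
  have hinf : Set.Infinite {x : ℝ | x ≠ 0} := by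
    have h0 := (Set.finite_singleton (0:ℝ)).infinite_compl
    have he : ({0}ᶜ : Set ℝ) = {x : ℝ | x ≠ 0} := by ext y; simp
    rwa [he] at h0
  constructor
  · -- odd case
    intro ho
    apply Polynomial.eq_of_infinite_eval_eq
    apply hinf.mono
    intro x hx
    simp only [Set.mem_setOf_eq] at hx ⊢
    set t := Real.arsinh (x/2) with ht
    have hxe : Real.exp t - Real.exp (-t) = x := by
      have h1 := Real.sinh_arsinh (x/2)
      rw [Real.sinh_eq] at h1
      linarith
    have ha0 : 0 < Real.exp t + Real.exp (-t) := by positivity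
    set a := Real.exp t + Real.exp (-t) with hA
    set K := (n-1)/2 with hK
    -- x * eval x q = sVal (n+1) x + sVal (n-1) x
    have hq : x * Polynomial.eval x (∑ m ∈ Finset.range (K + 1),
        Polynomial.C (((n : ℝ) * (n - m - 1).factorial) / ((m.factorial : ℝ) * (n - 2 * m).factorial))
          * Polynomial.X ^ (n - 2 * m - 1))
        = sVal (n+1) x + sVal (n-1) x := by
      rw [Polynomial.eval_finset_sum]
      simp only [Polynomial.eval_mul, Polynomial.eval_C, Polynomial.eval_pow, Polynomial.eval_X]
      rw [Finset.mul_sum]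
      have hstep : ∀ m ∈ Finset.range (K+1),
          x * (((n : ℝ) * (n - m - 1).factorial) / ((m.factorial : ℝ) * (n - 2 * m).factorial)
            * x ^ (n - 2 * m - 1))
          = ((n-m).choose m : ℝ) * x ^ (n - 2*m)
            + (if m = 0 then 0 else ((n-m-1).choose (m-1) : ℝ) * x ^ (n - 2*m)) := by
        intro m hm
        rw [Finset.mem_range] at hm
        have h2m : 2*m ≤ n - 1 := by
          have := Nat.odd_iff.mp ho
          omega
        have hxp : x * x ^ (n - 2*m - 1) = x ^ (n - 2*m) := by
          rw [← pow_succ']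
          congr 1
          omega
        rcases Nat.eq_zero_or_pos m with rfl | hm1
        · rw [lucas_coeff_zero n hn, if_pos rfl, add_zero, Nat.choose_zero_right,
            Nat.cast_one, one_mul, one_mul, ← hxp]
        · rw [lucas_coeff_real n m hm1 h2m hn, if_neg (by omega)]
          rw [← hxp]
          ring
      rw [Finset.sum_congr rfl hstep, Finset.sum_add_distrib]
      congr 1
      · -- first sum = sVal (n+1) x
        rw [sVal]
        rw [← Finset.sum_subset (Finset.range_subset_range.mpr (by omega : K + 1 ≤ n + 1))
          (by
            intro m hm hmn
            rw [Finset.mem_range] at hm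
            rw [Finset.mem_range, not_lt] at hmn
            have : n + 1 ≤ 2*m := by
              have := Nat.odd_iff.mp ho
              omega
            rw [choose_vanish (by omega) this]
            norm_num)]
        apply Finset.sum_congr rfl
        intro m hm
        rw [show n + 1 - 1 - m = n - m by omega, show n + 1 - 1 - 2*m = n - 2*m by omega]
      · -- second sum = sVal (n-1) x
        rw [Finset.sum_range_succ', if_pos rfl, add_zero, sVal]
        rw [← Finset.sum_subset (Finset.range_subset_range.mpr (by omega : K ≤ n - 1))
          (by
            intro m hm hmn
            rw [Finset.mem_range] at hm
            rw [Finset.mem_range, not_lt] at hmn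
            have h1n : 1 ≤ n - 1 := by omega
            have : n - 1 ≤ 2*m := by
              have := Nat.odd_iff.mp ho
              omega
            rw [choose_vanish h1n this]
            norm_num)]
        apply Finset.sum_congr rfl
        intro m hm
        rw [if_neg (by omega : ¬(m + 1 = 0))]
        rw [show m + 1 - 1 = m by omega, show n - (m+1) - 1 = n - 1 - 1 - m by omega,
          show n - 2*(m+1) = n - 1 - 1 - 2*m by omega]
    -- values
    have hv1 := sVal_val (n+1) t
    have hv2 := sVal_val (n-1) t
    rw [hxe] at hv1 hv2
    have hno : ¬ Even n := Nat.not_even_iff_odd.mpr ho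
    have hkey := V_eval_key n hn t
    rw [hxe, if_neg hno, one_mul] at hkey
    -- exp simplifications
    have he1 : Real.exp ((n+1:ℕ)*t) = Real.exp (n*t) * Real.exp t := by
      rw [← Real.exp_add]; congr 1; push_cast; ring
    have he2 : Real.exp (-((n+1:ℕ)*t)) = Real.exp (-(n*t)) * Real.exp (-t) := by
      rw [← Real.exp_add]; congr 1; push_cast; ring
    have he3 : Real.exp ((n-1:ℕ)*t) = Real.exp (n*t) * Real.exp (-t) := by
      rw [← Real.exp_add]; congr 1; rw [Nat.cast_sub hn]; push_cast; ring
    have he4 : Real.exp (-((n-1:ℕ)*t)) = Real.exp (-(n*t)) * Real.exp t := by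
      rw [← Real.exp_add]; congr 1; rw [Nat.cast_sub hn]; push_cast; ring
    have hs1 : ((-1:ℝ))^(n+1) = 1 := (Odd.add_one ho).neg_one_pow
    have hs2 : ((-1:ℝ))^(n-1) = 1 := by
      refine Even.neg_one_pow ?_
      have := Nat.odd_iff.mp ho
      exact Nat.even_iff.mpr (by omega)
    rw [he1, he2, hs1] at hv1
    rw [he3, he4, hs2] at hv2
    -- combine
    have hcomb : (x * Polynomial.eval x (∑ m ∈ Finset.range (K + 1),
        Polynomial.C (((n : ℝ) * (n - m - 1).factorial) / ((m.factorial : ℝ) * (n - 2 * m).factorial))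
          * Polynomial.X ^ (n - 2 * m - 1))) * a
        = (Real.exp (n*t) - Real.exp (-(n*t))) * a := by
      rw [hq, add_mul, hv1, hv2]
      ring
    rw [hkey] at hcomb
    have h2 := mul_right_cancel₀ ha0.ne' hcomb
    exact (mul_left_cancel₀ hx h2).symm
  · -- even case
    intro he
    apply Polynomial.eq_of_infinite_eval_eq
    apply hinf.mono
    intro x hx
    simp only [Set.mem_setOf_eq] at hx ⊢
    set t := Real.arsinh (x/2) with ht
    have hxe : Real.exp t - Real.exp (-t) = x := by
      have h1 := Real.sinh_arsinh (x/2)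
      rw [Real.sinh_eq] at h1
      linarith
    have ha0 : 0 < Real.exp t + Real.exp (-t) := by positivity
    set a := Real.exp t + Real.exp (-t) with hA
    have hq : x * Polynomial.eval x (∑ m ∈ Finset.range (n / 2),
        Polynomial.C (((n - m - 1).choose m : ℝ)) * Polynomial.X ^ (n - 2 * m - 2))
        = sVal n x := by
      rw [Polynomial.eval_finset_sum]
      simp only [Polynomial.eval_mul, Polynomial.eval_C, Polynomial.eval_pow, Polynomial.eval_X]
      rw [Finset.mul_sum, sVal]
      rw [← Finset.sum_subset (Finset.range_subset_range.mpr (by omega : n / 2 ≤ n))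
        (by
          intro m hm hmn
          rw [Finset.mem_range] at hm
          rw [Finset.mem_range, not_lt] at hmn
          have h2 : n ≤ 2*m := by
            rcases he with ⟨j, hj⟩
            omega
          rw [choose_vanish hn h2]
          norm_num)]
      apply Finset.sum_congr rfl
      intro m hm
      rw [Finset.mem_range] at hm
      have h2m : 2*m + 2 ≤ n := by
        rcases he with ⟨j, hj⟩
        omega
      rw [show n - m - 1 = n - 1 - m by omega]
      rw [show x * (((n - 1 - m).choose m : ℝ) * x ^ (n - 2*m - 2))
          = ((n - 1 - m).choose m : ℝ) * (x * x ^ (n - 2*m - 2)) by ring]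
      congr 1
      rw [← pow_succ']
      congr 1
      omega
    have hv := sVal_val n t
    rw [hxe, Even.neg_one_pow he, one_mul] at hv
    have hkey := V_eval_key n hn t
    rw [hxe, if_pos he] at hkey
    have hcomb : (x * Polynomial.eval x (∑ m ∈ Finset.range (n / 2),
        Polynomial.C (((n - m - 1).choose m : ℝ)) * Polynomial.X ^ (n - 2 * m - 2))) * a
        = (x * (a * Polynomial.eval x (V n))) := by
      rw [hq, hv, hkey]
    have h2 : x * (a * Polynomial.eval x (V n))
        = (x * (a * Polynomial.eval x (∑ m ∈ Finset.range (n / 2),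
        Polynomial.C (((n - m - 1).choose m : ℝ)) * Polynomial.X ^ (n - 2 * m - 2)))) := by
      rw [← hcomb]; ring
    have h3 := mul_left_cancel₀ hx h2
    exact mul_left_cancel₀ ha0.ne' h3
end

section
/- For all integers n ≥ 1 and m ≥ 0, the quantity n(n−m−1)!/(m!(n−2m)!) (for 0 ≤ m ≤ (n−1)/2) is an integer, equal to C(n−m, m) + C(n−m−1, m−1). -/
/-- For `n ≥ 1` and `0 ≤ m ≤ (n−1)/2`, the quantity `n(n−m−1)!/(m!(n−2m)!)` is an
integer, equal to `C(n−m, m) + C(n−m−1, m−1)` (where `C(a, −1) = 0`). -/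
theorem V_coeff_integral (n m : ℕ) (hn : 1 ≤ n) (hm : 2 * m ≤ n - 1) :
    (m.factorial * (n - 2 * m).factorial) ∣ n * (n - m - 1).factorial ∧
    n * (n - m - 1).factorial = m.factorial * (n - 2 * m).factorial *
      ((n - m).choose m + if m = 0 then 0 else (n - m - 1).choose (m - 1)) := by
  have key : n * (n - m - 1).factorial = m.factorial * (n - 2 * m).factorial *
      ((n - m).choose m + if m = 0 then 0 else (n - m - 1).choose (m - 1)) := by
    cases m with
    | zero =>
      simp
      exact Nat.mul_factorial_pred (show n ≠ 0 by omega)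
    | succ k =>
      obtain ⟨a, rfl⟩ : ∃ a, n = a + k + 2 := ⟨n - k - 2, by omega⟩
      have hk : k + 1 ≤ a + 1 := by omega
      have hk' : k ≤ a := by omega
      have e1 := Nat.choose_mul_factorial_mul_factorial hk
      have e2 := Nat.choose_mul_factorial_mul_factorial hk'
      have r1 : a + 1 - (k + 1) = a - k := by omega
      rw [r1] at e1
      have s1 : a + k + 2 - (k + 1) - 1 = a := by omega
      have s2 : a + k + 2 - (k + 1) = a + 1 := by omega
      have s3 : a + k + 2 - 2 * (k + 1) = a - k := by omega
      rw [s1, s2, s3, if_neg (Nat.succ_ne_zero k), Nat.succ_sub_one]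
      have f1 : (k + 1).factorial = (k + 1) * k.factorial := Nat.factorial_succ k
      have f2 : (a + 1).factorial = (a + 1) * a.factorial := Nat.factorial_succ a
      calc (a + k + 2) * a.factorial
          = (a + 1) * a.factorial + (k + 1) * a.factorial := by ring
        _ = (a + 1).factorial + (k + 1) * (a.choose k * k.factorial * (a - k).factorial) := by
            rw [e2, f2]
        _ = (a + 1).choose (k + 1) * (k + 1).factorial * (a - k).factorial
            + (k + 1) * (a.choose k * k.factorial * (a - k).factorial) := by rw [e1]
        _ = (k + 1).factorial * (a - k).factorial * ((a + 1).choose (k + 1) + a.choose k) := by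
            rw [f1]; ring
  exact ⟨⟨_, key⟩, key⟩
end

section
/- Define W_n(x) = ∏_{1 ≤ k < n/2, gcd(k,n)=1} (x^2 + 4 sin^2(πk/n)) with W_1 = W_2 = 1. Then for every n ≥ 1, V_n(x) = ∏_{d ∣ n} W_d(x), and consequently W_n(x) = ∏_{d ∣ n} V_d(x)^{μ(n/d)}. -/
open Finset Polynomial Real

lemma V_eq_prod_W (n : ℕ) (hn : 0 < n) : V n = ∏ d ∈ n.divisors, W d := by
  unfold V W
  rw [Finset.prod_sigma']
  refine (Finset.prod_bij' (fun p _ => p.2 * (n / p.1))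
    (fun k _ => ⟨n / Nat.gcd k n, k / Nat.gcd k n⟩) ?_ ?_ ?_ ?_ ?_).symm
  · rintro ⟨d, j⟩ hp
    simp only [Finset.mem_sigma, Nat.mem_divisors, Finset.mem_filter, Finset.mem_Ico] at hp
    obtain ⟨⟨hdn, hn0⟩, ⟨hj1, hjd⟩, hjd2, hgcd⟩ := hp
    have hd0 : 0 < d := Nat.pos_of_dvd_of_pos hdn hn
    have hm : d * (n / d) = n := Nat.mul_div_cancel' hdn
    have hm0 : 0 < n / d := Nat.div_pos (Nat.le_of_dvd hn hdn) hd0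
    simp only [Finset.mem_filter, Finset.mem_Ico]
    have h2 : 2 * (j * (n / d)) < n := by
      calc 2 * (j * (n / d)) = (2 * j) * (n / d) := by ring
        _ < d * (n / d) := (Nat.mul_lt_mul_right hm0).mpr hjd2
        _ = n := hm
    refine ⟨⟨Nat.one_le_iff_ne_zero.mpr ?_, by omega⟩, h2⟩
    positivity
  · rintro k hk
    simp only [Finset.mem_filter, Finset.mem_Ico] at hk
    obtain ⟨⟨hk1, hkn⟩, hk2⟩ := hk
    have hk0 : 0 < k := hk1
    have hg0 : 0 < Nat.gcd k n := Nat.gcd_pos_of_pos_left n hk0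
    have hgk : Nat.gcd k n ∣ k := Nat.gcd_dvd_left k n
    have hgn : Nat.gcd k n ∣ n := Nat.gcd_dvd_right k n
    simp only [Finset.mem_sigma, Nat.mem_divisors, Finset.mem_filter, Finset.mem_Ico]
    have hdk : k / Nat.gcd k n * Nat.gcd k n = k := Nat.div_mul_cancel hgk
    have hdn : n / Nat.gcd k n * Nat.gcd k n = n := Nat.div_mul_cancel hgn
    have h2 : 2 * (k / Nat.gcd k n) < n / Nat.gcd k n := by
      have h : 2 * (k / Nat.gcd k n) * Nat.gcd k n < n / Nat.gcd k n * Nat.gcd k n := by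
        rw [hdn]
        calc 2 * (k / Nat.gcd k n) * Nat.gcd k n
            = 2 * (k / Nat.gcd k n * Nat.gcd k n) := by ring
          _ = 2 * k := by rw [hdk]
          _ < n := hk2
      exact lt_of_mul_lt_mul_right h (Nat.zero_le _)
    refine ⟨⟨Nat.div_dvd_of_dvd hgn, by omega⟩, ⟨?_, by omega⟩, h2,
      Nat.coprime_div_gcd_div_gcd hg0⟩
    exact (Nat.one_le_div_iff hg0).mpr (Nat.le_of_dvd hk0 hgk)
  · rintro ⟨d, j⟩ hp
    simp only [Finset.mem_sigma, Nat.mem_divisors, Finset.mem_filter, Finset.mem_Ico] at hp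
    obtain ⟨⟨hdn, hn0⟩, ⟨hj1, hjd⟩, hjd2, hgcd⟩ := hp
    have hd0 : 0 < d := Nat.pos_of_dvd_of_pos hdn hn
    have hm : d * (n / d) = n := Nat.mul_div_cancel' hdn
    have hm0 : 0 < n / d := Nat.div_pos (Nat.le_of_dvd hn hdn) hd0
    have hgcd' : Nat.gcd (j * (n / d)) n = n / d := by
      calc Nat.gcd (j * (n / d)) n = Nat.gcd (j * (n / d)) (d * (n / d)) := by rw [hm]
        _ = Nat.gcd j d * (n / d) := Nat.gcd_mul_right j (n / d) d
        _ = n / d := by rw [hgcd, one_mul]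
    have h1 : n / (n / d) = d := Nat.div_div_self hdn (by omega)
    have h2 : j * (n / d) / (n / d) = j := by
      rw [mul_comm, Nat.mul_div_cancel_left _ hm0]
    simp only [hgcd', h1, h2]
  · rintro k hk
    simp only [Finset.mem_filter, Finset.mem_Ico] at hk
    have hg0 : 0 < Nat.gcd k n := Nat.gcd_pos_of_pos_left n hk.1.1
    show k / Nat.gcd k n * (n / (n / Nat.gcd k n)) = k
    rw [Nat.div_div_self (Nat.gcd_dvd_right k n) (by omega),
      Nat.div_mul_cancel (Nat.gcd_dvd_left k n)]
  · rintro ⟨d, j⟩ hp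
    simp only [Finset.mem_sigma, Nat.mem_divisors, Finset.mem_filter, Finset.mem_Ico] at hp
    obtain ⟨⟨hdn, hn0⟩, ⟨hj1, hjd⟩, hjd2, hgcd⟩ := hp
    have hd0 : 0 < d := Nat.pos_of_dvd_of_pos hdn hn
    have hm : d * (n / d) = n := Nat.mul_div_cancel' hdn
    have hm0 : 0 < n / d := Nat.div_pos (Nat.le_of_dvd hn hdn) hd0
    have hd' : (d : ℝ) ≠ 0 := Nat.cast_ne_zero.mpr (by omega)
    have hm' : ((n / d : ℕ) : ℝ) ≠ 0 := Nat.cast_ne_zero.mpr (by omega)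
    have hnz : (n : ℝ) ≠ 0 := Nat.cast_ne_zero.mpr (by omega)
    have hneq : (n : ℝ) = (d : ℝ) * ((n / d : ℕ) : ℝ) := by exact_mod_cast hm.symm
    have harg : Real.pi * ((j * (n / d) : ℕ) : ℝ) / n = Real.pi * j / d := by
      push_cast
      rw [hneq]
      field_simp
    show (X : Polynomial ℝ) ^ 2 + C (4 * Real.sin (Real.pi * j / d) ^ 2) =
        X ^ 2 + C (4 * Real.sin (Real.pi * ((j * (n / d) : ℕ) : ℝ) / n) ^ 2)
    rw [harg]

lemma V_monic (n : ℕ) : (V n).Monic := by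
  apply Polynomial.monic_prod_of_monic
  intro k _
  exact Polynomial.monic_X_pow_add (lt_of_le_of_lt Polynomial.degree_C_le (by norm_num))

lemma W_monic (n : ℕ) : (W n).Monic := by
  apply Polynomial.monic_prod_of_monic
  intro k _
  exact Polynomial.monic_X_pow_add (lt_of_le_of_lt Polynomial.degree_C_le (by norm_num))

lemma moebius_trichotomy (m : ℕ) :
    ArithmeticFunction.moebius m = 1 ∨ ArithmeticFunction.moebius m = 0 ∨
      ArithmeticFunction.moebius m = -1 := by
  by_cases h : Squarefree m
  · rw [ArithmeticFunction.moebius_apply_of_squarefree h]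
    rcases Nat.even_or_odd (ArithmeticFunction.cardFactors m) with he | ho
    · exact Or.inl he.neg_one_pow
    · exact Or.inr (Or.inr ho.neg_one_pow)
  · exact Or.inr (Or.inl (ArithmeticFunction.moebius_eq_zero_of_not_squarefree h))

lemma W_moebius (n : ℕ) (hn : 0 < n) :
    W n * ∏ d ∈ n.divisors.filter (fun d => ArithmeticFunction.moebius (n / d) = -1), V d =
      ∏ d ∈ n.divisors.filter (fun d => ArithmeticFunction.moebius (n / d) = 1), V d := by
  set φ := algebraMap (Polynomial ℝ) (RatFunc ℝ) with hφ
  have hinj : Function.Injective φ := RatFunc.algebraMap_injective ℝ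
  apply hinj
  rw [map_mul, map_prod, map_prod]
  have hWne : ∀ m, 0 < m → φ (W m) ≠ 0 := fun m _ =>
    (map_ne_zero_iff φ hinj).mpr (W_monic m).ne_zero
  have hVne : ∀ m, 0 < m → φ (V m) ≠ 0 := fun m _ =>
    (map_ne_zero_iff φ hinj).mpr (V_monic m).ne_zero
  have key : ∀ m > 0, ∏ x ∈ m.divisorsAntidiagonal,
      φ (V x.2) ^ (ArithmeticFunction.moebius x.1) = φ (W m) := by
    rw [← ArithmeticFunction.prod_eq_iff_prod_pow_moebius_eq_of_nonzero hWne hVne]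
    intro m hm
    rw [← map_prod, ← V_eq_prod_W m hm]
  have key' := key n hn
  rw [Nat.prod_divisorsAntidiagonal' (fun a b => φ (V b) ^ (ArithmeticFunction.moebius a))] at key'
  set μ := ArithmeticFunction.moebius
  set t : ℕ → RatFunc ℝ := fun d => φ (V d) ^ (μ (n / d)) with ht
  have split1 := Finset.prod_filter_mul_prod_filter_not n.divisors
    (fun d => μ (n / d) = 1) t
  have split2 := Finset.prod_filter_mul_prod_filter_not
    (n.divisors.filter (fun d => ¬ μ (n / d) = 1)) (fun d => μ (n / d) = -1) t
  have hB : (n.divisors.filter (fun d => ¬ μ (n / d) = 1)).filter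
      (fun d => μ (n / d) = -1) = n.divisors.filter (fun d => μ (n / d) = -1) := by
    rw [Finset.filter_filter]
    apply Finset.filter_congr
    intro d _
    omega
  have hA : ∏ d ∈ n.divisors.filter (fun d => μ (n / d) = 1), t d =
      ∏ d ∈ n.divisors.filter (fun d => μ (n / d) = 1), φ (V d) := by
    apply Finset.prod_congr rfl
    intro d hd
    simp only [Finset.mem_filter] at hd
    rw [ht]
    simp only [hd.2, zpow_one]
  have hBprod : ∏ d ∈ n.divisors.filter (fun d => μ (n / d) = -1), t d =
      (∏ d ∈ n.divisors.filter (fun d => μ (n / d) = -1), φ (V d))⁻¹ := by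
    rw [← Finset.prod_inv_distrib]
    apply Finset.prod_congr rfl
    intro d hd
    simp only [Finset.mem_filter] at hd
    rw [ht]
    simp only [hd.2, zpow_neg, zpow_one]
  have hC : ∏ d ∈ ((n.divisors.filter (fun d => ¬ μ (n / d) = 1)).filter
      (fun d => ¬ μ (n / d) = -1)), t d = 1 := by
    apply Finset.prod_eq_one
    intro d hd
    simp only [Finset.mem_filter] at hd
    have h0 : μ (n / d) = 0 := by
      rcases moebius_trichotomy (n / d) with h | h | h
      · exact absurd h hd.1.2
      · exact h
      · exact absurd h hd.2
    rw [ht]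
    simp only [h0, zpow_zero]
  have hBne : (∏ d ∈ n.divisors.filter (fun d => μ (n / d) = -1), φ (V d)) ≠ 0 :=
    Finset.prod_ne_zero_iff.mpr fun d hd =>
      hVne d (Nat.pos_of_mem_divisors (Finset.mem_filter.mp hd).1)
  have hWn : φ (W n) = (∏ d ∈ n.divisors.filter (fun d => μ (n / d) = 1), φ (V d)) *
      (∏ d ∈ n.divisors.filter (fun d => μ (n / d) = -1), φ (V d))⁻¹ := by
    rw [← key', ← split1, ← split2, hB, hA, hBprod, hC, mul_one]
  rw [hWn, inv_mul_cancel_right₀ hBne]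

/-- `V_n = ∏_{d ∣ n} W_d`, and consequently `W_n = ∏_{d ∣ n} V_d^{μ(n/d)}`
(the latter written multiplicatively, splitting the product according to the
sign of `μ(n/d)`). -/
theorem V_W_moebius (n : ℕ) (hn : 1 ≤ n) :
    (V n = ∏ d ∈ n.divisors, W d) ∧
    (W n * ∏ d ∈ n.divisors.filter (fun d => ArithmeticFunction.moebius (n / d) = -1), V d =
      ∏ d ∈ n.divisors.filter (fun d => ArithmeticFunction.moebius (n / d) = 1), V d) := by
  exact ⟨V_eq_prod_W n hn, W_moebius n hn⟩
end

section
/- For an odd prime p and integer r ≥ 1, V_{p^r}(x) ≡ x^{p^r − 1} (mod p), and for p = 2 and r ≥ 1, V_{2^r}(x) ≡ x^{2^r − 2} (mod 2). -/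
open Finset Polynomial Real

theorem dickson_eval_add' {S : Type*} [CommRing S] {a x y : S} (h : x * y = a) :
    ∀ n, (Polynomial.dickson 1 a n).eval (x + y) = x ^ n + y ^ n := by
  subst h
  intro n
  induction n using Nat.twoStepInduction with
  | zero => simp [Polynomial.dickson_zero]; norm_num
  | one => simp
  | more n ih1 ih2 =>
    simp only [Polynomial.dickson_add_two, Polynomial.eval_sub, Polynomial.eval_mul,
      Polynomial.eval_X, Polynomial.eval_C, ih1, ih2]
    ring

theorem dickson_two_eval' {S : Type*} [CommRing S] {a x y : S} (h : x * y = a) :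
    ∀ n, (x - y) * (Polynomial.dickson 2 a n).eval (x + y) = x ^ (n+1) - y ^ (n+1) := by
  subst h
  intro n
  induction n using Nat.twoStepInduction with
  | zero => simp [Polynomial.dickson_zero]; norm_num
  | one => simp; ring
  | more n ih1 ih2 =>
    have : (x - y) * ((Polynomial.dickson 2 (x*y) (n+2)).eval (x+y)) =
        (x + y) * ((x - y) * (Polynomial.dickson 2 (x*y) (n+1)).eval (x+y))
        - (x*y) * ((x - y) * (Polynomial.dickson 2 (x*y) n).eval (x+y)) := by
      simp only [Polynomial.dickson_add_two, Polynomial.eval_sub, Polynomial.eval_mul,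
        Polynomial.eval_X, Polynomial.eval_C]
      ring
    rw [this, ih1, ih2]
    ring


theorem dickson_deg_le {S : Type*} [CommRing S] {a : S} (k : ℕ) :
    ∀ n, (Polynomial.dickson k a n).degree ≤ n := by
  intro n
  induction n using Nat.twoStepInduction with
  | zero =>
    rw [Polynomial.dickson_zero]
    refine le_trans (Polynomial.degree_sub_le _ _) (max_le ?_ ?_)
    · exact_mod_cast Polynomial.degree_natCast_le (R := S) 3
    · exact_mod_cast Polynomial.degree_natCast_le (R := S) k
  | one => simp [Polynomial.degree_X_le]
  | more n ih1 ih2 =>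
    rw [Polynomial.dickson_add_two]
    refine le_trans (Polynomial.degree_sub_le _ _) (max_le ?_ ?_)
    · refine le_trans (Polynomial.degree_mul_le _ _) ?_
      calc Polynomial.X.degree + (Polynomial.dickson k a (n+1)).degree
          ≤ 1 + (n+1 : ℕ) := add_le_add Polynomial.degree_X_le ih2
        _ ≤ ((n+2 : ℕ) : WithBot ℕ) := by push_cast; exact le_of_eq (by ring)
    · refine le_trans (Polynomial.degree_mul_le _ _) ?_
      calc (Polynomial.C a).degree + (Polynomial.dickson k a n).degree
          ≤ 0 + (n : ℕ) := add_le_add Polynomial.degree_C_le ih1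
        _ ≤ ((n+2:ℕ) : WithBot ℕ) := by
            rw [zero_add]; exact_mod_cast (by omega : n ≤ n+2)

theorem dickson_step_monic {S : Type*} [CommRing S] [Nontrivial S] {a : S} (k n : ℕ)
    (hm : (Polynomial.dickson k a (n+1)).Monic)
    (hd : (Polynomial.dickson k a (n+1)).natDegree = n+1) :
    (Polynomial.dickson k a (n+2)).Monic ∧ (Polynomial.dickson k a (n+2)).natDegree = n+2 := by
  have hXd : (Polynomial.X * Polynomial.dickson k a (n+1)).degree = ((n+2 : ℕ) : WithBot ℕ) := by
    rw [hm.degree_mul, Polynomial.degree_X, Polynomial.degree_eq_natDegree hm.ne_zero, hd]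
    push_cast; ring
  have hlt : (Polynomial.C a * Polynomial.dickson k a n).degree
      < (Polynomial.X * Polynomial.dickson k a (n+1)).degree := by
    rw [hXd]
    refine lt_of_le_of_lt (le_trans (Polynomial.degree_mul_le _ _)
      (add_le_add Polynomial.degree_C_le (dickson_deg_le k n))) ?_
    rw [zero_add]; exact_mod_cast (by omega : n < n+2)
  constructor
  · rw [Polynomial.dickson_add_two]
    exact ((Polynomial.monic_X.mul hm).sub_of_left hlt)
  · rw [Polynomial.dickson_add_two]
    apply Polynomial.natDegree_eq_of_degree_eq_some
    rw [Polynomial.degree_sub_eq_left_of_degree_lt hlt, hXd]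

theorem dickson_one_monic {S : Type*} [CommRing S] [Nontrivial S] {a : S} :
    ∀ n, 1 ≤ n → (Polynomial.dickson 1 a n).Monic ∧ (Polynomial.dickson 1 a n).natDegree = n := by
  intro n
  induction n using Nat.twoStepInduction with
  | zero => omega
  | one => intro _; exact ⟨Polynomial.monic_X, Polynomial.natDegree_X⟩
  | more n ih1 ih2 =>
    intro _
    obtain ⟨hm, hd⟩ := ih2 (by omega)
    exact dickson_step_monic 1 n hm hd

theorem dickson_two_monic {S : Type*} [CommRing S] [Nontrivial S] {a : S} :
    ∀ n, (Polynomial.dickson 2 a n).Monic ∧ (Polynomial.dickson 2 a n).natDegree = n := by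
  intro n
  induction n using Nat.twoStepInduction with
  | zero =>
    constructor
    · rw [Polynomial.dickson_zero]; norm_num
    · rw [Polynomial.dickson_zero]; norm_num
  | one => exact ⟨Polynomial.monic_X, Polynomial.natDegree_X⟩
  | more n ih1 ih2 => exact dickson_step_monic 2 n ih2.1 ih2.2


theorem real_pts (P Q : Polynomial ℝ)
    (h : ∀ x : ℝ, 1 < x → P.eval (x + -x⁻¹) = Q.eval (x + -x⁻¹)) : P = Q := by
  apply Polynomial.eq_of_infinite_eval_eq
  have hinj : Set.InjOn (fun x : ℝ => x + -x⁻¹) (Set.Ioi 1) := by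
    have hmono : StrictMonoOn (fun x : ℝ => x + -x⁻¹) (Set.Ioi 1) := by
      intro u hu v hv huv
      simp only
      have h1 : (0:ℝ) < u := lt_trans one_pos hu
      have := inv_strictAnti₀ h1 huv
      linarith
    exact hmono.injOn
  apply Set.Infinite.mono (s := (fun x : ℝ => x + -x⁻¹) '' (Set.Ioi 1))
  · rintro _ ⟨x, hx, rfl⟩
    exact h x hx
  · exact (Set.Ioi_infinite 1).image hinj

theorem dickson_comp_odd (m n : ℕ) (hn : Odd n) :
    Polynomial.dickson 1 (-1 : ℤ) (m * n)
      = (Polynomial.dickson 1 (-1 : ℤ) m).comp (Polynomial.dickson 1 (-1 : ℤ) n) := by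
  apply Polynomial.map_injective (Int.castRingHom ℝ) Int.cast_injective
  rw [Polynomial.map_dickson, Polynomial.map_comp, Polynomial.map_dickson, Polynomial.map_dickson]
  simp only [eq_intCast, Int.cast_neg, Int.cast_one]
  apply real_pts
  intro x hx
  have hx0 : x ≠ 0 := by positivity
  have hxy : x * (-x⁻¹) = (-1 : ℝ) := by field_simp
  rw [Polynomial.eval_comp, dickson_eval_add' hxy, dickson_eval_add' hxy,
    dickson_eval_add' (show x^n * (-x⁻¹)^n = (-1:ℝ) by
      rw [← mul_pow, hxy, hn.neg_one_pow]),
    ← pow_mul, ← pow_mul, mul_comm n m]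

theorem dickson_E_double (s : ℕ) :
    Polynomial.dickson 2 (-1 : ℤ) (2*s+1)
      = Polynomial.dickson 2 (-1 : ℤ) s * Polynomial.dickson 1 (-1 : ℤ) (s+1) := by
  apply Polynomial.map_injective (Int.castRingHom ℝ) Int.cast_injective
  rw [Polynomial.map_dickson, Polynomial.map_mul, Polynomial.map_dickson, Polynomial.map_dickson]
  simp only [eq_intCast, Int.cast_neg, Int.cast_one]
  apply real_pts
  intro x hx
  have hx0 : x ≠ 0 := by positivity
  have hxy : x * (-x⁻¹) = (-1 : ℝ) := by field_simp
  have hsub : x - (-x⁻¹) ≠ 0 := by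
    have h1 : (0:ℝ) < x := lt_trans one_pos hx
    have he : x - (-x⁻¹) = x + x⁻¹ := by ring
    rw [he]; positivity
  apply mul_left_cancel₀ hsub
  rw [dickson_two_eval' hxy, Polynomial.eval_mul, ← mul_assoc,
    dickson_two_eval' hxy, dickson_eval_add' hxy]
  ring


theorem dickson_neg_one_zmod (p : ℕ) [Fact p.Prime] :
    Polynomial.dickson 1 (-1 : ZMod p) p = Polynomial.X ^ p := by
  obtain ⟨K, _, _, H⟩ : ∃ (K : Type) (_ : Field K), ∃ _ : CharP K p, Infinite K := by
    let K := FractionRing (Polynomial (ZMod p))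
    let f : ZMod p →+* K := (algebraMap _ (FractionRing _)).comp Polynomial.C
    have : CharP K p := by
      rw [← f.charP_iff_charP]
      infer_instance
    haveI : Infinite K :=
      Infinite.of_injective (algebraMap (Polynomial (ZMod p)) (FractionRing (Polynomial (ZMod p))))
        (IsFractionRing.injective _ _)
    refine ⟨K, ?_, ?_, ?_⟩ <;> infer_instance
  apply Polynomial.map_injective (ZMod.castHom (dvd_refl p) K) (RingHom.injective _)
  rw [Polynomial.map_dickson, Polynomial.map_pow, Polynomial.map_X, map_neg, map_one]
  apply Polynomial.eq_of_infinite_eval_eq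
  apply Set.Infinite.mono (s := { t : K | ∃ x : K, x ≠ 0 ∧ t = x + -x⁻¹ })
  · rintro _ ⟨x, hx, rfl⟩
    have hxy : x * (-x⁻¹) = (-1 : K) := by field_simp
    simp only [Set.mem_setOf_eq, Polynomial.eval_pow, Polynomial.eval_X,
      dickson_eval_add' hxy, add_pow_char]
  · -- the set {x - x⁻¹} is infinite
    intro hfin
    have hcov : (Set.univ : Set K) ⊆
        {(0:K)} ∪ ⋃ t ∈ { t : K | ∃ x : K, x ≠ 0 ∧ t = x + -x⁻¹ },
          { x : K | (Polynomial.X^2 - Polynomial.C t * Polynomial.X - 1 : Polynomial K).IsRoot x } := by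
      intro x _
      by_cases hx : x = 0
      · exact Or.inl (by simp [hx])
      · refine Or.inr ?_
        refine Set.mem_biUnion ⟨x, hx, rfl⟩ ?_
        simp only [Set.mem_setOf_eq, Polynomial.IsRoot.def, Polynomial.eval_sub,
          Polynomial.eval_pow, Polynomial.eval_mul, Polynomial.eval_X, Polynomial.eval_C,
          Polynomial.eval_one]
        field_simp
        ring
    have hfin2 : ({(0:K)} ∪ ⋃ t ∈ { t : K | ∃ x : K, x ≠ 0 ∧ t = x + -x⁻¹ },
        { x : K | (Polynomial.X^2 - Polynomial.C t * Polynomial.X - 1 : Polynomial K).IsRoot x }).Finite := by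
      refine (Set.finite_singleton 0).union (Set.Finite.biUnion hfin fun t _ => ?_)
      apply Polynomial.finite_setOf_isRoot
      intro h0
      have := congrArg (fun q => Polynomial.coeff q 2) h0
      simp [Polynomial.coeff_one] at this
    exact Set.infinite_univ (Set.Finite.subset hfin2 hcov)


theorem exp_pt (θ : ℝ) :
    Complex.exp (θ*Complex.I) + -(Complex.exp (θ*Complex.I))⁻¹ = 2*Complex.I*(Real.sin θ : ℂ) := by
  rw [← Complex.exp_neg]
  have h1 : -(↑θ*Complex.I) = (↑(-θ))*Complex.I := by push_cast; ring
  rw [h1, Complex.exp_mul_I, Complex.exp_mul_I, ← Complex.ofReal_cos, ← Complex.ofReal_sin,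
    ← Complex.ofReal_cos (-θ), ← Complex.ofReal_sin (-θ), Real.cos_neg, Real.sin_neg]
  push_cast; ring

theorem exp_pt_cos (θ : ℝ) :
    Complex.exp (θ*Complex.I) - -(Complex.exp (θ*Complex.I))⁻¹ = 2*(Real.cos θ : ℂ) := by
  rw [← Complex.exp_neg]
  have h1 : -(↑θ*Complex.I) = (↑(-θ))*Complex.I := by push_cast; ring
  rw [h1, Complex.exp_mul_I, Complex.exp_mul_I, ← Complex.ofReal_cos, ← Complex.ofReal_sin,
    ← Complex.ofReal_cos (-θ), ← Complex.ofReal_sin (-θ), Real.cos_neg, Real.sin_neg]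
  push_cast; ring

theorem exp_pow_pi_int (n : ℕ) (hn : 0 < n) (j : ℤ) :
    Complex.exp ((Real.pi * j / n : ℝ) * Complex.I) ^ n = (-1:ℂ)^j := by
  rw [← Complex.exp_nat_mul]
  have h1 : (n:ℂ) * ((Real.pi * j / n : ℝ) * Complex.I) = (j:ℂ) * ((Real.pi:ℝ) * Complex.I) := by
    have hn' : (n:ℂ) ≠ 0 := Nat.cast_ne_zero.mpr hn.ne'
    push_cast
    field_simp
  rw [h1, Complex.exp_int_mul, Complex.exp_pi_mul_I]

theorem neg_one_zpow_inv (j : ℤ) : ((-1:ℂ)^j)⁻¹ = (-1:ℂ)^j := by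
  rw [← zpow_neg]
  rcases Int.even_or_odd j with h | h
  · rw [h.neg_one_zpow, (by simpa using h.neg : Even (-j)).neg_one_zpow]
  · rw [h.neg_one_zpow, ((by simpa using h.neg : Odd (-j))).neg_one_zpow]



-- the mapped V over ℂ
theorem V_map_eq (n : ℕ) :
    (V n).map Complex.ofRealHom = ∏ k ∈ (Finset.Ico 1 n).filter (fun k => 2 * k < n),
      (Polynomial.X ^ 2 + Polynomial.C ((4 * Real.sin (Real.pi * k / n) ^ 2 : ℝ) : ℂ)) := by
  rw [V, Polynomial.map_prod]
  exact Finset.prod_congr rfl fun k _ => by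
    rw [Polynomial.map_add, Polynomial.map_pow, Polynomial.map_X, Polynomial.map_C]; rfl

theorem V_monic_deg (n : ℕ) :
    ((V n).map Complex.ofRealHom).Monic ∧
      ((V n).map Complex.ofRealHom).natDegree
        = 2 * ((Finset.Ico 1 n).filter (fun k => 2 * k < n)).card := by
  rw [V_map_eq]
  constructor
  · exact Polynomial.monic_prod_of_monic _ _ fun k _ =>
      Polynomial.monic_X_pow_add_C _ (by norm_num)
  · rw [Polynomial.natDegree_prod_of_monic _ _ fun k _ =>
      Polynomial.monic_X_pow_add_C _ (by norm_num)]
    rw [Finset.sum_congr rfl fun k _ => Polynomial.natDegree_X_pow_add_C (n := 2)]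
    rw [Finset.sum_const, smul_eq_mul, mul_comm]

-- evaluation of mapped V at the special points is zero for j ≠ 0
theorem V_eval_zero (n : ℕ) (hn : 0 < n) (j : ℤ) (hj : j ≠ 0) (hjn : 2 * j.natAbs < n) :
    (((V n).map Complex.ofRealHom)).eval
      (2*Complex.I*((Real.sin (Real.pi * j / n) : ℝ) : ℂ)) = 0 := by
  rw [V_map_eq, Polynomial.eval_prod]
  apply Finset.prod_eq_zero (i := j.natAbs)
  · simp only [Finset.mem_filter, Finset.mem_Ico]
    refine ⟨⟨by omega, by omega⟩, hjn⟩
  · have hc : ((j:ℝ) = ((j.natAbs : ℕ):ℝ)) ∨ ((j:ℝ) = -((j.natAbs : ℕ):ℝ)) := by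
      rcases Int.natAbs_eq j with h | h
      · left
        rw [show ((j.natAbs : ℕ):ℝ) = (((j.natAbs : ℕ):ℤ):ℝ) by rw [Int.cast_natCast], ← h]
      · right
        rw [show ((j.natAbs : ℕ):ℝ) = (((j.natAbs : ℕ):ℤ):ℝ) by rw [Int.cast_natCast]]
        rw [show ((j:ℝ)) = (((-(j.natAbs:ℤ)):ℤ):ℝ) by rw [← h], Int.cast_neg]
    have hsin : (4 * Real.sin (Real.pi * (j.natAbs) / n) ^ 2 : ℝ)
        = 4 * Real.sin (Real.pi * j / n) ^ 2 := by
      rcases hc with h | h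
      · rw [← h]
      · rw [show (Real.pi * j / n : ℝ) = -(Real.pi * (j.natAbs) / n) by rw [h]; ring,
          Real.sin_neg]
        ring
    simp only [Polynomial.eval_add, Polynomial.eval_pow, Polynomial.eval_X, Polynomial.eval_mul,
      Polynomial.eval_C, hsin]
    have h2 : (2*Complex.I*((Real.sin (Real.pi * j / n) : ℝ) : ℂ))^2
        = -4 * ((Real.sin (Real.pi * j / n) : ℝ) : ℂ)^2 := by
      rw [mul_pow, mul_pow, Complex.I_sq]; ring
    rw [h2]
    have h3 : ((4 * Real.sin (Real.pi * j / n) ^ 2 : ℝ) : ℂ)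
        = 4 * ((Real.sin (Real.pi * j / n) : ℝ) : ℂ)^2 := by push_cast; ring
    rw [h3]; ring

theorem card_filter_odd (m : ℕ) :
    ((Finset.Ico 1 (2*m+1)).filter (fun k => 2 * k < 2*m+1)).card = m := by
  have : (Finset.Ico 1 (2*m+1)).filter (fun k => 2 * k < 2*m+1) = Finset.Ico 1 (m+1) := by
    ext k; simp only [Finset.mem_filter, Finset.mem_Ico]; omega
  rw [this, Nat.card_Ico]; omega

theorem card_filter_even (m : ℕ) (hm : 1 ≤ m) :
    ((Finset.Ico 1 (2*m)).filter (fun k => 2 * k < 2*m)).card = m - 1 := by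
  have : (Finset.Ico 1 (2*m)).filter (fun k => 2 * k < 2*m) = Finset.Ico 1 m := by
    ext k; simp only [Finset.mem_filter, Finset.mem_Ico]; omega
  rw [this, Nat.card_Ico]

theorem pts_injOn (n : ℕ) (hn : 0 < n) (b : ℤ) (hb : 2 * b ≤ n) :
    Set.InjOn (fun j : ℤ => 2*Complex.I*((Real.sin (Real.pi * j / n) : ℝ) : ℂ))
      (Finset.Icc (-b) b : Finset ℤ) := by
  intro j1 h1 j2 h2 he
  simp only [Finset.coe_Icc, Set.mem_Icc] at h1 h2
  have hI : (2*Complex.I) ≠ 0 := by simp [Complex.I_ne_zero]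
  have he2 : ((Real.sin (Real.pi * j1 / n) : ℝ) : ℂ) = ((Real.sin (Real.pi * j2 / n) : ℝ) : ℂ) :=
    mul_left_cancel₀ hI he
  have he3 : Real.sin (Real.pi * j1 / n) = Real.sin (Real.pi * j2 / n) :=
    Complex.ofReal_injective he2
  have hnR : (0:ℝ) < n := by exact_mod_cast hn
  have hmem : ∀ j : ℤ, -b ≤ j → j ≤ b →
      Real.pi * j / n ∈ Set.Icc (-(Real.pi/2)) (Real.pi/2) := by
    intro j hj1 hj2
    have hj1R : (-b : ℝ) ≤ j := by exact_mod_cast hj1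
    have hj2R : (j : ℝ) ≤ b := by exact_mod_cast hj2
    have hbR : 2 * (b:ℝ) ≤ n := by exact_mod_cast hb
    constructor
    · rw [le_div_iff₀ hnR]
      nlinarith [Real.pi_pos]
    · rw [div_le_iff₀ hnR]
      nlinarith [Real.pi_pos]
  have := Real.injOn_sin (hmem j1 h1.1 h1.2) (hmem j2 h2.1 h2.2) he3
  have hj : (j1 : ℝ) = j2 := by
    field_simp [Real.pi_ne_zero, hnR.ne'] at this
    exact_mod_cast this
  exact_mod_cast hj

theorem key_link (n : ℕ) (Q : Polynomial ℂ) (b : ℤ) (hb : 0 ≤ b) (hbn : 2*b ≤ n) (hn : 0 < n)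
    (hQm : Q.Monic) (hQd : (Q.natDegree : ℤ) = 2*b+1)
    (hVd : (2 * ((Finset.Ico 1 n).filter (fun k => 2 * k < n)).card : ℤ) = 2*b)
    (hfilter : ∀ j : ℤ, j ≠ 0 → -b ≤ j → j ≤ b → 2 * j.natAbs < n)
    (hQe : ∀ j : ℤ, -b ≤ j → j ≤ b →
      Q.eval (2*Complex.I*((Real.sin (Real.pi * j / n) : ℝ) : ℂ)) = 0) :
    Polynomial.X * (V n).map Complex.ofRealHom = Q := by
  obtain ⟨hVm, hVdeg⟩ := V_monic_deg n
  set P := (V n).map Complex.ofRealHom with hP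
  have hXPm : (Polynomial.X * P).Monic := Polynomial.monic_X.mul hVm
  have hXPd : ((Polynomial.X * P).natDegree : ℤ) = 2*b+1 := by
    rw [Polynomial.natDegree_mul Polynomial.X_ne_zero hVm.ne_zero, Polynomial.natDegree_X, hVdeg]
    push_cast
    omega
  rw [← sub_eq_zero]
  by_cases hzero : Polynomial.X * P - Q = 0
  · exact hzero
  · exfalso
    apply hzero
    set s : Finset ℂ :=
      (Finset.Icc (-b) b).image (fun j : ℤ => 2*Complex.I*((Real.sin (Real.pi * j / n) : ℝ) : ℂ))
      with hs
    apply Polynomial.eq_zero_of_natDegree_lt_card_of_eval_eq_zero' _ s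
    · intro c hc
      rw [hs, Finset.mem_image] at hc
      obtain ⟨j, hj, rfl⟩ := hc
      rw [Finset.mem_Icc] at hj
      rw [Polynomial.eval_sub, hQe j hj.1 hj.2, sub_zero, Polynomial.eval_mul]
      by_cases hj0 : j = 0
      · subst hj0
        simp
      · rw [V_eval_zero n hn j hj0 (hfilter j hj0 hj.1 hj.2), mul_zero]
    · have hcard : (s.card : ℤ) = 2*b+1 := by
        rw [hs, Finset.card_image_of_injOn (pts_injOn n hn b hbn), Int.card_Icc]
        omega
      have hdeglt : (Polynomial.X * P - Q).degree < (Polynomial.X * P).degree :=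
        Polynomial.degree_sub_lt
          (by rw [Polynomial.degree_eq_natDegree hXPm.ne_zero,
                Polynomial.degree_eq_natDegree hQm.ne_zero]
              exact congrArg (fun k : ℕ => (k : WithBot ℕ)) (by omega))
          (hXPm.ne_zero) (by rw [hXPm.leadingCoeff, hQm.leadingCoeff])
      have : (Polynomial.X * P - Q).natDegree < (Polynomial.X * P).natDegree := by
        rw [Polynomial.natDegree_lt_iff_degree_lt hzero,
          ← Polynomial.degree_eq_natDegree hXPm.ne_zero]
        exact hdeglt
      omega

theorem map_map_int (P : Polynomial ℤ) :
    (P.map (Int.castRingHom ℝ)).map Complex.ofRealHom = P.map (Int.castRingHom ℂ) := by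
  rw [Polynomial.map_map]
  congr 1

theorem key_odd (n : ℕ) (hodd : Odd n) (hn : 1 ≤ n) :
    Polynomial.X * V n = (Polynomial.dickson 1 (-1:ℤ) n).map (Int.castRingHom ℝ) := by
  apply Polynomial.map_injective Complex.ofRealHom Complex.ofReal_injective
  rw [Polynomial.map_mul, Polynomial.map_X, map_map_int, Polynomial.map_dickson]
  simp only [eq_intCast, Int.cast_neg, Int.cast_one]
  obtain ⟨m, hm⟩ := hodd
  have hm' : n = 2*m+1 := by omega
  obtain ⟨hQm, hQd⟩ := dickson_one_monic (a := (-1:ℂ)) n hn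
  apply key_link n _ m (by omega) (by omega) (by omega) hQm (by rw [hQd]; omega)
    (by rw [hm', card_filter_odd]) (by intro j hj0 hj1 hj2; omega)
  intro j hj1 hj2
  have hpt := exp_pt (Real.pi * j / n)
  have hxy : Complex.exp ((Real.pi * j / n : ℝ)*Complex.I)
      * -(Complex.exp ((Real.pi * j / n : ℝ)*Complex.I))⁻¹ = (-1:ℂ) := by
    rw [mul_neg, mul_inv_cancel₀ (Complex.exp_ne_zero _)]
  rw [← hpt, dickson_eval_add' hxy, exp_pow_pi_int n (by omega) j,
    Odd.neg_pow (show Odd n from ⟨m, by omega⟩), inv_pow, exp_pow_pi_int n (by omega) j, neg_one_zpow_inv]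
  ring

theorem key_even (n : ℕ) (m : ℕ) (hm : 1 ≤ m) (hn : n = 2*m) :
    Polynomial.X * V n = (Polynomial.dickson 2 (-1:ℤ) (n-1)).map (Int.castRingHom ℝ) := by
  apply Polynomial.map_injective Complex.ofRealHom Complex.ofReal_injective
  rw [Polynomial.map_mul, Polynomial.map_X, map_map_int, Polynomial.map_dickson]
  simp only [eq_intCast, Int.cast_neg, Int.cast_one]
  obtain ⟨hQm, hQd⟩ := dickson_two_monic (a := (-1:ℂ)) (n-1)
  have hnR : (0:ℝ) < n := by
    have h0 : 0 < n := by omega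
    exact_mod_cast h0
  have hsub : n - 1 + 1 = n := by omega
  apply key_link n _ ((m:ℤ)-1) (by omega) (by omega) (by omega) hQm (by rw [hQd]; omega)
    (by rw [hn, card_filter_even m hm]; omega) (by intro j hj0 hj1 hj2; omega)
  intro j hj1 hj2
  have hpt := exp_pt (Real.pi * j / n)
  have h2c := exp_pt_cos (Real.pi * j / n)
  have hxy : Complex.exp ((Real.pi * j / n : ℝ)*Complex.I)
      * -(Complex.exp ((Real.pi * j / n : ℝ)*Complex.I))⁻¹ = (-1:ℂ) := by
    rw [mul_neg, mul_inv_cancel₀ (Complex.exp_ne_zero _)]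
  have hcos : 0 < Real.cos (Real.pi * j / n) := by
    apply Real.cos_pos_of_mem_Ioo
    constructor
    · rw [lt_div_iff₀ hnR]
      have hj1R : -((m:ℝ)-1) ≤ (j:ℝ) := by exact_mod_cast hj1
      have hnn : (n:ℝ) = 2*(m:ℝ) := by exact_mod_cast hn
      nlinarith [Real.pi_pos]
    · rw [div_lt_iff₀ hnR]
      have hj2R : (j:ℝ) ≤ (m:ℝ)-1 := by exact_mod_cast hj2
      have hnn : (n:ℝ) = 2*(m:ℝ) := by exact_mod_cast hn
      nlinarith [Real.pi_pos]
  have hne : Complex.exp ((Real.pi * j / n : ℝ)*Complex.I)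
      - -(Complex.exp ((Real.pi * j / n : ℝ)*Complex.I))⁻¹ ≠ 0 := by
    rw [h2c]
    simp only [ne_eq, mul_eq_zero, Complex.ofReal_eq_zero, not_or]
    exact ⟨two_ne_zero, hcos.ne'⟩
  apply mul_left_cancel₀ hne
  rw [mul_zero, ← hpt, dickson_two_eval' hxy, hsub, exp_pow_pi_int n (by omega) j,
    Even.neg_pow (show Even n from ⟨m, by omega⟩), inv_pow, exp_pow_pi_int n (by omega) j, neg_one_zpow_inv]
  ring


theorem dickson_coeff_zero_odd (n : ℕ) (hn : Odd n) :
    (Polynomial.dickson 1 (-1 : ℤ) n).coeff 0 = 0 := by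
  have h := dickson_eval_add' (show (1:ℤ) * (-1) = -1 by ring) n
  rw [add_neg_cancel] at h
  rw [Polynomial.coeff_zero_eq_eval_zero, h, one_pow, hn.neg_one_pow]
  ring

theorem dickson_two_coeff_zero_odd (k : ℕ) (hk : Odd k) :
    (Polynomial.dickson 2 (-1 : ℤ) k).coeff 0 = 0 := by
  have h := dickson_two_eval' (show (1:ℤ) * (-1) = -1 by ring) k
  rw [add_neg_cancel, sub_neg_eq_add] at h
  norm_num at h
  rw [Polynomial.coeff_zero_eq_eval_zero]
  have h2 : (Odd (k+1)) ∨ Even (k+1) := Or.inr hk.add_one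
  have : ((-1:ℤ))^(k+1) = 1 := (hk.add_one).neg_one_pow
  rw [this] at h
  omega

theorem dickson_pow_odd_zmod (p : ℕ) (hp : p.Prime) (hodd : Odd p) :
    ∀ r, 1 ≤ r →
      (Polynomial.dickson 1 (-1:ℤ) (p^r)).map (Int.castRingHom (ZMod p))
        = Polynomial.X ^ (p^r) := by
  haveI : Fact p.Prime := ⟨hp⟩
  intro r
  induction r with
  | zero => omega
  | succ r ih =>
    intro _
    by_cases hr : r = 0
    · subst hr
      rw [pow_one, Polynomial.map_dickson]
      simp only [eq_intCast, Int.cast_neg, Int.cast_one]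
      exact dickson_neg_one_zmod p
    · have hpr : Odd (p^r) := hodd.pow
      have hcomp := dickson_comp_odd p (p^r) hpr
      have hps : p^(r+1) = p * p^r := by rw [pow_succ, mul_comm]
      rw [hps, hcomp, Polynomial.map_comp, ih (by omega)]
      have hD : (Polynomial.dickson 1 (-1:ℤ) p).map (Int.castRingHom (ZMod p))
          = Polynomial.X ^ p := by
        rw [Polynomial.map_dickson]
        simp only [eq_intCast, Int.cast_neg, Int.cast_one]
        exact dickson_neg_one_zmod p
      rw [hD, Polynomial.X_pow_comp, ← pow_mul, mul_comm (p^r) p, ← pow_succ']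

theorem dickson_one_one_two_pow (j : ℕ) :
    Polynomial.dickson 1 (1 : ZMod 2) (2^j) = Polynomial.X ^ (2^j) := by
  haveI : Fact (Nat.Prime 2) := ⟨Nat.prime_two⟩
  induction j with
  | zero => simp
  | succ j ih =>
    have h2 : (2:ℕ)^(j+1) = 2 * 2^j := by rw [pow_succ, mul_comm]
    rw [h2, Polynomial.dickson_one_one_mul, ih,
      Polynomial.dickson_one_one_zmod_p, Polynomial.X_pow_comp, ← pow_mul, mul_comm]

theorem neg_one_zmod_two : (-1 : ZMod 2) = 1 := by decide

theorem dickson_E_pow_two : ∀ r, 1 ≤ r →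
    (Polynomial.dickson 2 (-1:ℤ) (2^r - 1)).map (Int.castRingHom (ZMod 2))
      = Polynomial.X ^ (2^r - 1) := by
  intro r
  induction r with
  | zero => omega
  | succ r ih =>
    intro _
    by_cases hr : r = 0
    · subst hr
      norm_num
    · have h1 : (1:ℕ) ≤ 2^r := Nat.one_le_two_pow
      have h2 : (2:ℕ)^(r+1) = 2 * 2^r := by rw [pow_succ, mul_comm]
      have h3 : 2^(r+1) - 1 = 2*(2^r - 1)+1 := by omega
      have h4 : 2^r - 1 + 1 = 2^r := by omega
      rw [h3, dickson_E_double, Polynomial.map_mul, ih (by omega), h4, Polynomial.map_dickson]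
      have h5 : (Int.castRingHom (ZMod 2)) (-1) = (1 : ZMod 2) := by
        simp [neg_one_zmod_two]
      rw [h5, dickson_one_one_two_pow, ← pow_add]
      congr 1
      omega


/-- For an odd prime `p` and `r ≥ 1`, `V_{p^r}(x) ≡ x^{p^r − 1} (mod p)`; and
`V_{2^r}(x) ≡ x^{2^r − 2} (mod 2)`.  (The congruence is stated for the integer
polynomial whose real image is `V_{p^r}`.) -/
theorem V_prime_pow_congr (p r : ℕ) (hp : p.Prime) (hr : 1 ≤ r) :
    (Odd p → ∃ q : Polynomial ℤ, q.map (Int.castRingHom ℝ) = V (p ^ r) ∧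
      q.map (Int.castRingHom (ZMod p)) = Polynomial.X ^ (p ^ r - 1)) ∧
    (p = 2 → ∃ q : Polynomial ℤ, q.map (Int.castRingHom ℝ) = V (2 ^ r) ∧
      q.map (Int.castRingHom (ZMod 2)) = Polynomial.X ^ (2 ^ r - 2)) := by
  constructor
  · intro hoddp
    haveI : Fact p.Prime := ⟨hp⟩
    have hoddn : Odd (p^r) := hoddp.pow
    have hn1 : 1 ≤ p^r := Nat.one_le_pow r p hp.pos
    have hc0 := dickson_coeff_zero_odd (p^r) hoddn
    have hD : Polynomial.dickson 1 (-1:ℤ) (p^r)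
        = Polynomial.X * (Polynomial.dickson 1 (-1:ℤ) (p^r)).divX := by
      conv_lhs => rw [← Polynomial.X_mul_divX_add (Polynomial.dickson 1 (-1:ℤ) (p^r))]
      rw [hc0, Polynomial.C_0, add_zero]
    refine ⟨(Polynomial.dickson 1 (-1:ℤ) (p^r)).divX, ?_, ?_⟩
    · have hk := key_odd (p^r) hoddn hn1
      rw [hD, Polynomial.map_mul, Polynomial.map_X] at hk
      exact (mul_left_cancel₀ Polynomial.X_ne_zero hk).symm
    · have h2 := dickson_pow_odd_zmod p hp hoddp r hr
      rw [hD, Polynomial.map_mul, Polynomial.map_X] at h2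
      have hxp : (Polynomial.X : Polynomial (ZMod p))^(p^r)
          = Polynomial.X * Polynomial.X^(p^r-1) := by
        rw [← pow_succ']
        congr 1
        omega
      rw [hxp] at h2
      exact mul_left_cancel₀ Polynomial.X_ne_zero h2
  · intro hp2
    subst hp2
    have h1 : (1:ℕ) ≤ 2^(r-1) := Nat.one_le_two_pow
    have h2 : (2:ℕ)^r = 2 * 2^(r-1) := by
      conv_lhs => rw [show r = (r-1)+1 by omega]
      rw [pow_succ, mul_comm]
    have hoddk : Odd (2^r - 1) := ⟨2^(r-1)-1, by omega⟩
    have hc0 := dickson_two_coeff_zero_odd (2^r - 1) hoddk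
    have hD : Polynomial.dickson 2 (-1:ℤ) (2^r - 1)
        = Polynomial.X * (Polynomial.dickson 2 (-1:ℤ) (2^r - 1)).divX := by
      conv_lhs => rw [← Polynomial.X_mul_divX_add (Polynomial.dickson 2 (-1:ℤ) (2^r - 1))]
      rw [hc0, Polynomial.C_0, add_zero]
    refine ⟨(Polynomial.dickson 2 (-1:ℤ) (2^r - 1)).divX, ?_, ?_⟩
    · have hk := key_even (2^r) (2^(r-1)) h1 h2
      rw [hD, Polynomial.map_mul, Polynomial.map_X] at hk
      exact (mul_left_cancel₀ Polynomial.X_ne_zero hk).symm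
    · have hE := dickson_E_pow_two r hr
      rw [hD, Polynomial.map_mul, Polynomial.map_X] at hE
      have hxp : (Polynomial.X : Polynomial (ZMod 2))^(2^r-1)
          = Polynomial.X * Polynomial.X^(2^r-2) := by
        rw [← pow_succ']
        congr 1
        omega
      rw [hxp] at hE
      exact mul_left_cancel₀ Polynomial.X_ne_zero hE
end

section
/- For every non-negative integer k, the polynomial F_{2k+1}(x_1,…,x_{2k+1}) is divisible by x_1 − k in ℚ[x_1,…,x_{2k+1}]. -/
open Finset

/-- The coefficient ring `ℚ[x_1, x_2, x_3, …]`. -/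
abbrev R : Type := MvPolynomial ℕ ℚ

/-- The formal exponential `exp f = ∑_{k ≥ 0} f^k/k!` of a power series `f`
with zero constant term, defined coefficientwise. -/
noncomputable def expS (f : PowerSeries R) : PowerSeries R :=
  PowerSeries.mk fun n =>
    ∑ k ∈ Finset.range (n + 1),
      algebraMap ℚ R (1 / k.factorial) * PowerSeries.coeff n (f ^ k)

/-- The power series `−log(1+t) = ∑_{n ≥ 1} (−1)^n t^n/n`. -/
noncomputable def negLog1pt : PowerSeries R :=
  PowerSeries.mk fun n => if n = 0 then 0 else algebraMap ℚ R ((-1) ^ n / n)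

/-- `2 ∑_{ν ≥ 1} (B_{2ν}/(2ν)!)(−log(1+t))^{2ν} x_{2ν}`, defined
coefficientwise. -/
noncomputable def G : PowerSeries R :=
  PowerSeries.mk fun m =>
    ∑ ν ∈ Finset.Icc 1 m,
      algebraMap ℚ R (2 * bernoulli (2 * ν) / (2 * ν).factorial) * MvPolynomial.X (2 * ν) *
        PowerSeries.coeff m (negLog1pt ^ (2 * ν))

/-- The binomial series `(1+t)^{x_1} = ∑_{n ≥ 0} (x_1)_n t^n/n!`, where
`(x)_n = x(x−1)⋯(x−n+1)` is the falling factorial. -/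
noncomputable def onePlusTPowX1 : PowerSeries R :=
  PowerSeries.mk fun n =>
    algebraMap ℚ R (1 / n.factorial) *
      ∏ i ∈ Finset.range n, (MvPolynomial.X 1 - algebraMap ℚ R i)

/-- The Lehmer polynomials `F_k`, defined by
`(1+t)^{x_1} exp(2 ∑_{ν ≥ 1} (B_{2ν}/(2ν)!)(−log(1+t))^{2ν} x_{2ν}) = ∑_{k ≥ 0} F_k t^k/k!`. -/
noncomputable def F (k : ℕ) : R :=
  algebraMap ℚ R k.factorial * PowerSeries.coeff k (onePlusTPowX1 * expS G)


open Finset PowerSeries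

noncomputable def iQ : PowerSeries ℚ := PowerSeries.mk fun n => (-1)^n
noncomputable def sQ : PowerSeries ℚ := -(PowerSeries.X * iQ)
noncomputable def gQ : PowerSeries ℚ := PowerSeries.X^2 * iQ
noncomputable def LQ : PowerSeries ℚ := PowerSeries.mk fun n => if n = 0 then 0 else (-1)^n / n

lemma one_add_X_mul_iQ : (1 + PowerSeries.X) * iQ = 1 := by
  ext n
  rw [add_mul, one_mul, map_add]
  cases n with
  | zero => simp [iQ, coeff_zero_eq_constantCoeff]
  | succ m => simp [iQ, coeff_succ_X_mul, coeff_mk, pow_succ]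

lemma iQ_mul_one_add_X : iQ * (1 + PowerSeries.X) = 1 := by
  rw [mul_comm]; exact one_add_X_mul_iQ

lemma one_add_X_pow_mul_iQ_pow (m : ℕ) : (1 + PowerSeries.X)^m * iQ^m = 1 := by
  rw [← mul_pow, one_add_X_mul_iQ, one_pow]

lemma one_add_sQ : 1 + sQ = iQ := by
  have h := one_add_X_mul_iQ
  rw [add_mul, one_mul] at h
  rw [sQ, ← h]; ring

lemma sQ_mul_one_add_X : sQ * (1 + PowerSeries.X) = -PowerSeries.X := by
  calc sQ * (1 + PowerSeries.X) = -(PowerSeries.X * (iQ * (1 + PowerSeries.X))) := by rw [sQ]; ring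
  _ = -PowerSeries.X := by rw [iQ_mul_one_add_X, mul_one]

lemma sQ_sq_mul_one_add_X : sQ^2 * (1 + PowerSeries.X) = gQ := by
  calc sQ^2 * (1 + PowerSeries.X) = PowerSeries.X^2 * iQ * (iQ * (1 + PowerSeries.X)) := by
        rw [sQ]; ring
  _ = gQ := by rw [iQ_mul_one_add_X, mul_one, gQ]

lemma hockey (j m : ℕ) (hj : 1 ≤ j) :
    ∑ x ∈ range (m+1), (j-1+x).choose x = (j+m).choose m := by
  have h1 : ∀ x ∈ range (m+1), (j-1+x).choose x = (j-1+x).choose (j-1) := by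
    intro x _
    have : j - 1 ≤ j - 1 + x := Nat.le_add_right _ _
    rw [← Nat.choose_symm this]
    congr 1
    omega
  rw [Finset.sum_congr rfl h1]
  have h2 : ∑ i ∈ Icc (j-1) (j-1+m), i.choose (j-1) = ∑ x ∈ range (m+1), (j-1+x).choose (j-1) := by
    rw [← Finset.Ico_add_one_right_eq_Icc, Finset.sum_Ico_eq_sum_range]
    have : j - 1 + m + 1 - (j-1) = m + 1 := by omega
    rw [this]
  rw [← h2, Nat.sum_Icc_choose]
  have e1 : j - 1 + m + 1 = j + m := by omega
  have e2 : j - 1 + 1 = j := by omega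
  rw [e1, e2, ← Nat.choose_symm (Nat.le_add_right j m)]
  congr 1
  omega

lemma coeff_iQ_pow (n : ℕ) (hn : 1 ≤ n) (m : ℕ) :
    PowerSeries.coeff m (iQ^n) = (-1)^m * ((n-1+m).choose m) := by
  induction n generalizing m with
  | zero => omega
  | succ j ih =>
    rcases Nat.eq_or_lt_of_le hn with h1 | h1
    · simp [← h1, iQ, coeff_mk]
    · have hj : 1 ≤ j := by omega
      rw [pow_succ, PowerSeries.coeff_mul, Finset.Nat.sum_antidiagonal_eq_sum_range_succ_mk]
      simp only [ih hj]
      have hterm : ∀ a ∈ range (m+1), (-1:ℚ)^a * ((j-1+a).choose a) * PowerSeries.coeff (m - a) iQ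
          = (-1:ℚ)^m * ((j-1+a).choose a) := by
        intro a ha
        rw [mem_range] at ha
        rw [iQ, coeff_mk, mul_comm ((-1:ℚ)^a) _, mul_assoc, ← pow_add, mul_comm]
        congr 2
        omega
      rw [Finset.sum_congr rfl hterm, ← Finset.mul_sum, ← Nat.cast_sum, hockey j m hj]
      norm_num

lemma sQ_pow_eq (n : ℕ) : sQ^n = PowerSeries.X^n * ((-1)^n * iQ^n) := by
  rw [sQ]; ring

lemma coeff_sQ_pow_of_lt {j n : ℕ} (h : j < n) : PowerSeries.coeff j (sQ^n) = 0 := by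
  rw [sQ_pow_eq, PowerSeries.coeff_X_pow_mul', if_neg (by omega)]

lemma coeff_sQ_pow (n j : ℕ) (h1 : 1 ≤ n) (h2 : n ≤ j) :
    PowerSeries.coeff j (sQ^n) = (-1)^j * ((j-1).choose (j-n)) := by
  rw [sQ_pow_eq, PowerSeries.coeff_X_pow_mul', if_pos h2]
  have hc : ((-1 : PowerSeries ℚ))^n * iQ^n = PowerSeries.C ((-1)^n) * iQ^n := by
    simp
  rw [hc, PowerSeries.coeff_C_mul, coeff_iQ_pow n h1]
  have e1 : n - 1 + (j - n) = j - 1 := by omega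
  rw [e1, ← mul_assoc, ← pow_add]
  congr 2
  omega

lemma key_nat (j n : ℕ) (h1 : 1 ≤ n) (h2 : n ≤ j) :
    (j-1).choose (j-n) * j = j.choose n * n := by
  have e1 : (j-1).choose (j-n) = (j-1).choose (n-1) := by
    have h : n - 1 ≤ j - 1 := by omega
    rw [← Nat.choose_symm h]
    congr 1
    omega
  have h3 := Nat.add_one_mul_choose_eq (j-1) (n-1)
  have ej : j - 1 + 1 = j := by omega
  have en : n - 1 + 1 = n := by omega
  simp only [Nat.succ_eq_add_one, ej, en] at h3
  rw [e1, mul_comm]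
  exact h3

lemma alt_sum (j : ℕ) (hj : 1 ≤ j) : ∑ n ∈ Icc 1 j, ((-1:ℚ)^n * j.choose n) = -1 := by
  have hz := Int.alternating_sum_range_choose_of_ne (n := j) (by omega)
  have hins : range (j+1) = insert 0 (Icc 1 j) := by
    ext x; simp only [mem_range, mem_insert, mem_Icc]; omega
  rw [hins, Finset.sum_insert (by simp)] at hz
  simp only [pow_zero, Nat.choose_zero_right, Nat.cast_one, one_mul] at hz
  have : ∑ n ∈ Icc 1 j, ((-1:ℤ)^n * j.choose n) = -1 := by omega
  calc ∑ n ∈ Icc 1 j, ((-1:ℚ)^n * j.choose n)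
      = ((∑ n ∈ Icc 1 j, ((-1:ℤ)^n * j.choose n) : ℤ) : ℚ) := by
        push_cast; simp [mul_comm]
    _ = -1 := by rw [this]; norm_num

lemma LQ_invariance (N j : ℕ) (hj : j < N) :
    ∑ n ∈ range N, PowerSeries.coeff n LQ * PowerSeries.coeff j (sQ^n) =
      - PowerSeries.coeff j LQ := by
  rcases Nat.eq_zero_or_pos j with rfl | hj1
  · rw [show - PowerSeries.coeff 0 LQ = 0 by simp [LQ, coeff_mk]]
    apply Finset.sum_eq_zero
    intro n _
    rcases Nat.eq_zero_or_pos n with rfl | hn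
    · simp [LQ, coeff_mk]
    · rw [coeff_sQ_pow_of_lt hn, mul_zero]
  · have hsub : Icc 1 j ⊆ range N := by
      intro x hx; rw [mem_Icc] at hx; rw [mem_range]; omega
    rw [← Finset.sum_subset hsub (by
      intro x _ hx
      rw [mem_Icc] at hx
      rcases Nat.eq_zero_or_pos x with rfl | hx1
      · simp [LQ, coeff_mk]
      · have : j < x := by omega
        rw [coeff_sQ_pow_of_lt this, mul_zero])]
    have hterm : ∀ n ∈ Icc 1 j, PowerSeries.coeff n LQ * PowerSeries.coeff j (sQ^n)
        = (-1:ℚ)^j / j * ((-1)^n * j.choose n) := by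
      intro n hn
      rw [mem_Icc] at hn
      rw [LQ, coeff_mk, if_neg (by omega), coeff_sQ_pow n j hn.1 hn.2]
      have hkey := key_nat j n hn.1 hn.2
      have hkeyQ : ((j-1).choose (j-n) : ℚ) * j = (j.choose n : ℚ) * n := by
        exact_mod_cast congrArg (Nat.cast : ℕ → ℚ) hkey
      have hn0 : (n:ℚ) ≠ 0 := by
        rw [Nat.cast_ne_zero]; omega
      have hj0 : (j:ℚ) ≠ 0 := by
        rw [Nat.cast_ne_zero]; omega
      have hch : (((j-1).choose (j-n)) : ℚ) = (j.choose n : ℚ) * n / j := by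
        rw [eq_div_iff hj0]; exact hkeyQ
      rw [hch]
      field_simp
    rw [Finset.sum_congr rfl hterm, ← Finset.mul_sum, alt_sum j hj1]
    rw [LQ, coeff_mk, if_neg (by omega)]
    field_simp

section Rlayer
open Polynomial in
lemma eval₂_congr_of_coeff_eq {S : Type*} [CommRing S] {R' : Type*} [CommRing R']
    (cb : R' →+* S) (y : S) (N : ℕ) (hy : y ^ N = 0)
    (p q : Polynomial R') (h : ∀ j < N, p.coeff j = q.coeff j) :
    eval₂ cb y p = eval₂ cb y q := by
  have hd : Polynomial.X ^ N ∣ (p - q) :=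
    Polynomial.X_pow_dvd_iff.mpr (fun d hd => by simp [h d hd])
  obtain ⟨r, hr⟩ := hd
  have hp : p = q + Polynomial.X ^ N * r := by
    rw [← hr]; ring
  rw [hp, eval₂_add, eval₂_mul, eval₂_X_pow, hy, zero_mul, add_zero]

/-- Quotient of `R⟦X⟧` by `X^N`. -/
abbrev Qr (N : ℕ) : Type _ := PowerSeries R ⧸ Ideal.span {(PowerSeries.X ^ N : PowerSeries R)}

noncomputable def pr (N : ℕ) : PowerSeries R →+* Qr N := Ideal.Quotient.mk _

lemma pr_eq_iff {N : ℕ} {f h : PowerSeries R} :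
    pr N f = pr N h ↔ (PowerSeries.X : PowerSeries R) ^ N ∣ (f - h) := by
  rw [pr, Ideal.Quotient.mk_eq_mk_iff_sub_mem, Ideal.mem_span_singleton]

lemma pr_X_pow_N (N : ℕ) : (pr N PowerSeries.X) ^ N = 0 := by
  rw [← map_pow, pr, Ideal.Quotient.eq_zero_iff_mem]
  exact Ideal.mem_span_singleton_self _

/-- Evaluation of a power series mod `X^N` at a nilpotent `y`. -/
noncomputable def Ehom (N : ℕ) (hN : 2 ≤ N) (y : Qr N) (hy : y ^ N = 0) :
    PowerSeries R →+* Qr N where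
  toFun f := Polynomial.eval₂ ((pr N).comp (PowerSeries.C)) y (PowerSeries.trunc N f)
  map_zero' := by
    show Polynomial.eval₂ _ y (PowerSeries.trunc N 0) = 0
    rw [map_zero, Polynomial.eval₂_zero]
  map_one' := by
    obtain ⟨n, rfl⟩ : ∃ n, N = n + 2 := ⟨N - 2, by omega⟩
    show Polynomial.eval₂ _ y (PowerSeries.trunc (n+2) 1) = 1
    rw [show PowerSeries.trunc (n+2) (1 : PowerSeries R) = 1 from PowerSeries.trunc_one (n+1),
      Polynomial.eval₂_one]
  map_add' f g := by
    show Polynomial.eval₂ _ y (PowerSeries.trunc N (f + g)) = _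
    rw [map_add, Polynomial.eval₂_add]
  map_mul' f g := by
    show Polynomial.eval₂ _ y (PowerSeries.trunc N (f * g)) = _
    rw [← Polynomial.eval₂_mul]
    apply eval₂_congr_of_coeff_eq _ _ N hy
    intro j hj
    rw [PowerSeries.coeff_trunc, if_pos hj,
      PowerSeries.coeff_mul_eq_coeff_trunc_mul_trunc f g hj, ← Polynomial.coe_mul,
      Polynomial.coeff_coe]

lemma Ehom_apply (N : ℕ) (hN : 2 ≤ N) (y : Qr N) (hy : y ^ N = 0) (f : PowerSeries R) :
    Ehom N hN y hy f
      = Polynomial.eval₂ ((pr N).comp (PowerSeries.C)) y (PowerSeries.trunc N f) := rfl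

lemma Ehom_X (N : ℕ) (hN : 2 ≤ N) (y : Qr N) (hy : y ^ N = 0) :
    Ehom N hN y hy PowerSeries.X = y := by
  obtain ⟨n, rfl⟩ : ∃ n, N = n + 2 := ⟨N - 2, by omega⟩
  rw [Ehom_apply, PowerSeries.trunc_X, Polynomial.eval₂_X]

lemma Ehom_C (N : ℕ) (hN : 2 ≤ N) (y : Qr N) (hy : y ^ N = 0) (a : R) :
    Ehom N hN y hy (PowerSeries.C a) = pr N (PowerSeries.C a) := by
  obtain ⟨n, rfl⟩ : ∃ n, N = n + 2 := ⟨N - 2, by omega⟩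
  rw [Ehom_apply, show PowerSeries.trunc (n+2) (PowerSeries.C a) = Polynomial.C a
    from PowerSeries.trunc_C (n+1) a, Polynomial.eval₂_C]
  rfl

/-- `pr` is evaluation at `X` itself. -/
lemma pr_eq_Ehom (N : ℕ) (hN : 2 ≤ N) (f : PowerSeries R) :
    pr N f = Ehom N hN (pr N PowerSeries.X) (pr_X_pow_N N) f := by
  rw [Ehom_apply]
  have h1 : pr N f = pr N ((PowerSeries.trunc N f : Polynomial R) : PowerSeries R) := by
    rw [pr_eq_iff]
    apply PowerSeries.X_pow_dvd_iff.mpr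
    intro d hd
    rw [map_sub, PowerSeries.coeff_coe_trunc_of_lt hd, sub_self]
  rw [h1, ← Polynomial.eval₂_C_X_eq_coe, Polynomial.hom_eval₂]

/-- congruence mod `X^N` for `Ehom`. -/
lemma Ehom_congr (N : ℕ) (hN : 2 ≤ N) (y : Qr N) (hy : y ^ N = 0) (f h : PowerSeries R)
    (hfh : (PowerSeries.X : PowerSeries R) ^ N ∣ (f - h)) :
    Ehom N hN y hy f = Ehom N hN y hy h := by
  rw [Ehom_apply, Ehom_apply]
  apply eval₂_congr_of_coeff_eq _ _ N hy
  intro j hj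
  rw [PowerSeries.coeff_trunc, PowerSeries.coeff_trunc, if_pos hj, if_pos hj]
  have := (PowerSeries.X_pow_dvd_iff.mp hfh) j hj
  rw [map_sub] at this
  exact sub_eq_zero.mp this
end Rlayer

section Inv

/-- base change ℚ → R on power series -/
noncomputable def iota : PowerSeries ℚ →+* PowerSeries R := PowerSeries.map (algebraMap ℚ R)

lemma coeff_iota (n : ℕ) (f : PowerSeries ℚ) :
    PowerSeries.coeff n (iota f) = algebraMap ℚ R (PowerSeries.coeff n f) :=
  PowerSeries.coeff_map _ _ _

noncomputable def sR : PowerSeries R := iota sQ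
noncomputable def gR : PowerSeries R := iota gQ
noncomputable def iXR : PowerSeries R := iota iQ

lemma X_dvd_sR : (PowerSeries.X : PowerSeries R) ∣ sR := by
  refine ⟨iota (-iQ), ?_⟩
  rw [sR, show sQ = PowerSeries.X * (-iQ) by rw [sQ]; ring, map_mul]
  congr 1
  rw [iota, PowerSeries.map_X]

lemma pr_sR_pow (N : ℕ) : (pr N sR) ^ N = 0 := by
  obtain ⟨r, hr⟩ := pow_dvd_pow_of_dvd X_dvd_sR N
  rw [← map_pow, hr, map_mul, map_pow, pr_X_pow_N, zero_mul]

lemma coeff_sR_pow (j n : ℕ) :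
    PowerSeries.coeff j (sR ^ n) = algebraMap ℚ R (PowerSeries.coeff j (sQ ^ n)) := by
  rw [sR, ← map_pow, coeff_iota]

lemma coeff_gR_pow (j n : ℕ) :
    PowerSeries.coeff j (gR ^ n) = algebraMap ℚ R (PowerSeries.coeff j (gQ ^ n)) := by
  rw [gR, ← map_pow, coeff_iota]

lemma negLog_eq : negLog1pt = iota LQ := by
  ext n
  rw [negLog1pt, PowerSeries.coeff_mk, coeff_iota, LQ, PowerSeries.coeff_mk,
    apply_ite (algebraMap ℚ R)]
  simp

/-- `Ehom` at a projected substitution value, as a projection. -/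
lemma Ehom_pr (N : ℕ) (hN : 2 ≤ N) (σ0 : PowerSeries R) (hy : (pr N σ0) ^ N = 0)
    (f : PowerSeries R) :
    Ehom N hN (pr N σ0) hy f
      = pr N (Polynomial.eval₂ (PowerSeries.C) σ0 (PowerSeries.trunc N f)) := by
  rw [Ehom_apply, Polynomial.hom_eval₂]

lemma coeff_eval₂_trunc (N : ℕ) (hN : 2 ≤ N) (σ0 : PowerSeries R) (f : PowerSeries R) (j : ℕ) :
    PowerSeries.coeff j (Polynomial.eval₂ (PowerSeries.C) σ0 (PowerSeries.trunc N f))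
      = ∑ i ∈ Finset.range N, PowerSeries.coeff i f * PowerSeries.coeff j (σ0 ^ i) := by
  obtain ⟨n, rfl⟩ : ∃ n, N = n + 1 := ⟨N - 1, by omega⟩
  rw [Polynomial.eval₂_eq_sum_range' (PowerSeries.C) (PowerSeries.natDegree_trunc_lt f n) σ0,
    map_sum]
  apply Finset.sum_congr rfl
  intro i hi
  rw [Finset.mem_range] at hi
  rw [PowerSeries.coeff_C_mul, PowerSeries.coeff_trunc, if_pos hi]

/-- Extraction of coefficient relations from invariance. -/
lemma coeff_rel (N : ℕ) (hN : 2 ≤ N) (f : PowerSeries R)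
    (hf : Ehom N hN (pr N sR) (pr_sR_pow N) f = pr N f) (j : ℕ) (hj : j < N) :
    ∑ i ∈ Finset.range N, PowerSeries.coeff i f * PowerSeries.coeff j (sR ^ i)
      = PowerSeries.coeff j f := by
  rw [Ehom_pr, pr_eq_iff] at hf
  have := (PowerSeries.X_pow_dvd_iff.mp hf) j hj
  rw [map_sub, sub_eq_zero] at this
  rw [← coeff_eval₂_trunc N hN sR f j, this]

/-- Invariance of `-log(1+t)` up to sign. -/
lemma Ehom_negLog (N : ℕ) (hN : 2 ≤ N) :
    Ehom N hN (pr N sR) (pr_sR_pow N) negLog1pt = pr N (-negLog1pt) := by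
  rw [Ehom_pr, pr_eq_iff]
  apply PowerSeries.X_pow_dvd_iff.mpr
  intro j hj
  rw [map_sub, coeff_eval₂_trunc N hN sR negLog1pt j, sub_eq_zero]
  have : ∀ i ∈ Finset.range N,
      PowerSeries.coeff i negLog1pt * PowerSeries.coeff j (sR ^ i)
        = algebraMap ℚ R (PowerSeries.coeff i LQ * PowerSeries.coeff j (sQ ^ i)) := by
    intro i _
    rw [negLog_eq, coeff_iota, coeff_sR_pow, map_mul]
  rw [Finset.sum_congr rfl this, ← map_sum, LQ_invariance N j hj, map_neg, map_neg,
    negLog_eq, coeff_iota]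

end Inv

section GExp

lemma constantCoeff_negLog : PowerSeries.constantCoeff negLog1pt = 0 := by
  rw [← PowerSeries.coeff_zero_eq_constantCoeff_apply, negLog1pt, PowerSeries.coeff_mk, if_pos rfl]

lemma constantCoeff_G : PowerSeries.constantCoeff G = 0 := by
  rw [← PowerSeries.coeff_zero_eq_constantCoeff_apply, G, PowerSeries.coeff_mk]
  simp

lemma coeff_pow_eq_zero_of_lt {f : PowerSeries R} (hf : PowerSeries.constantCoeff f = 0)
    {j n : ℕ} (h : j < n) : PowerSeries.coeff j (f ^ n) = 0 := by
  have : (PowerSeries.X : PowerSeries R) ^ n ∣ f ^ n :=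
    pow_dvd_pow_of_dvd (PowerSeries.X_dvd_iff.mpr hf) n
  exact (PowerSeries.X_pow_dvd_iff.mp this) j h

/-- coefficient of `G` as coefficient of the degree-bounded combination. -/
noncomputable def aCoef (ν : ℕ) : R :=
  algebraMap ℚ R (2 * bernoulli (2 * ν) / (2 * ν).factorial) * MvPolynomial.X (2 * ν)

noncomputable def Gsum (N : ℕ) : PowerSeries R :=
  ∑ ν ∈ Finset.Icc 1 (N-1), PowerSeries.C (aCoef ν) * negLog1pt ^ (2 * ν)

lemma G_mod (N : ℕ) : (PowerSeries.X : PowerSeries R) ^ N ∣ (G - Gsum N) := by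
  apply PowerSeries.X_pow_dvd_iff.mpr
  intro j hj
  rw [map_sub, sub_eq_zero, G, PowerSeries.coeff_mk, Gsum, map_sum]
  have hsub : Finset.Icc 1 j ⊆ Finset.Icc 1 (N-1) := by
    apply Finset.Icc_subset_Icc_right; omega
  rw [← Finset.sum_subset hsub (by
    intro ν hν hν2
    rw [Finset.mem_Icc] at hν hν2
    rw [PowerSeries.coeff_C_mul,
      coeff_pow_eq_zero_of_lt constantCoeff_negLog (by omega : j < 2 * ν), mul_zero])]
  apply Finset.sum_congr rfl
  intro ν _
  rw [PowerSeries.coeff_C_mul, aCoef]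

noncomputable def Esum (N : ℕ) : PowerSeries R :=
  ∑ j ∈ Finset.range N, PowerSeries.C (algebraMap ℚ R (1 / j.factorial)) * G ^ j

lemma exp_mod (N : ℕ) : (PowerSeries.X : PowerSeries R) ^ N ∣ (expS G - Esum N) := by
  apply PowerSeries.X_pow_dvd_iff.mpr
  intro n hn
  rw [map_sub, sub_eq_zero, expS, PowerSeries.coeff_mk, Esum, map_sum]
  have hsub : Finset.range (n+1) ⊆ Finset.range N := by
    apply Finset.range_subset_range.mpr; omega
  rw [← Finset.sum_subset hsub (by
    intro j hj hj2
    rw [Finset.mem_range] at hj hj2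
    rw [PowerSeries.coeff_C_mul,
      coeff_pow_eq_zero_of_lt constantCoeff_G (by omega : n < j), mul_zero])]
  apply Finset.sum_congr rfl
  intro j _
  rw [PowerSeries.coeff_C_mul]

lemma Ehom_G (N : ℕ) (hN : 2 ≤ N) :
    Ehom N hN (pr N sR) (pr_sR_pow N) G = pr N G := by
  have h1 : Ehom N hN (pr N sR) (pr_sR_pow N) G
      = Ehom N hN (pr N sR) (pr_sR_pow N) (Gsum N) := Ehom_congr _ _ _ _ _ _ (G_mod N)
  have h2 : pr N G = pr N (Gsum N) := pr_eq_iff.mpr (G_mod N)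
  rw [h1, h2, Gsum, map_sum, map_sum]
  apply Finset.sum_congr rfl
  intro ν _
  rw [map_mul, map_pow, map_mul, map_pow, Ehom_C, Ehom_negLog, map_neg]
  congr 1
  exact Even.neg_pow (even_two_mul ν) ((pr N) negLog1pt)

lemma Ehom_expS_G (N : ℕ) (hN : 2 ≤ N) :
    Ehom N hN (pr N sR) (pr_sR_pow N) (expS G) = pr N (expS G) := by
  have h1 : Ehom N hN (pr N sR) (pr_sR_pow N) (expS G)
      = Ehom N hN (pr N sR) (pr_sR_pow N) (Esum N) := Ehom_congr _ _ _ _ _ _ (exp_mod N)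
  have h2 : pr N (expS G) = pr N (Esum N) := pr_eq_iff.mpr (exp_mod N)
  rw [h1, h2, Esum, map_sum, map_sum]
  apply Finset.sum_congr rfl
  intro j _
  rw [map_mul, map_pow, map_mul, map_pow, Ehom_C, Ehom_G]

end GExp

section Struct

lemma iota_one_add_X : iota (1 + PowerSeries.X) = 1 + PowerSeries.X := by
  rw [map_add, map_one, iota, PowerSeries.map_X]

lemma iXR_mul_one_add_X : iXR * (1 + PowerSeries.X) = 1 := by
  rw [iXR, ← iota_one_add_X, ← map_mul, iQ_mul_one_add_X, map_one]

lemma one_add_sR : (1 : PowerSeries R) + sR = iXR := by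
  rw [sR, iXR, ← one_add_sQ, map_add, map_one]

lemma gR_eq : sR ^ 2 * (1 + PowerSeries.X) = gR := by
  rw [sR, gR, ← iota_one_add_X, ← map_pow, ← map_mul, sQ_sq_mul_one_add_X]

lemma sR_eq : sR = PowerSeries.X * (-iXR) := by
  rw [sR, iXR, show sQ = PowerSeries.X * (-iQ) by rw [sQ]; ring, map_mul, map_neg]
  congr 1
  rw [iota, PowerSeries.map_X]

lemma Ehom_gR (N : ℕ) (hN : 2 ≤ N) :
    Ehom N hN (pr N sR) (pr_sR_pow N) gR = pr N gR := by
  set s := pr N sR with hs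
  set E := Ehom N hN (pr N sR) (pr_sR_pow N) with hE
  set w := E iXR with hwdef
  have hEX : E PowerSeries.X = s := Ehom_X N hN _ _
  have hE1X : E (1 + PowerSeries.X) = 1 + s := by rw [map_add, map_one, hEX]
  have h1s : (1 : Qr N) + s = pr N iXR := by
    rw [hs, ← map_one (pr N), ← map_add, one_add_sR]
  have hw : w * pr N iXR = 1 := by
    rw [hwdef, ← h1s, ← hE1X, ← map_mul, iXR_mul_one_add_X, map_one]
  have hv : pr N iXR * pr N (1 + PowerSeries.X) = 1 := by
    rw [← map_mul, iXR_mul_one_add_X, map_one]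
  have hw1X : w = pr N (1 + PowerSeries.X) := by
    calc w = w * (pr N iXR * pr N (1 + PowerSeries.X)) := by rw [hv, mul_one]
    _ = (w * pr N iXR) * pr N (1 + PowerSeries.X) := by ring
    _ = pr N (1 + PowerSeries.X) := by rw [hw, one_mul]
  have hEsR : E sR = s * (-w) := by
    rw [sR_eq, map_mul, hEX, map_neg, hwdef]
  calc E gR = E (sR ^ 2 * (1 + PowerSeries.X)) := by rw [gR_eq]
  _ = (E sR)^2 * E (1 + PowerSeries.X) := by rw [map_mul, map_pow]
  _ = s^2 * w * (w * pr N iXR) := by rw [hEsR, hE1X, h1s]; ring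
  _ = s^2 * pr N (1 + PowerSeries.X) := by rw [hw, mul_one, hw1X]
  _ = pr N (sR^2 * (1 + PowerSeries.X)) := by rw [map_mul, map_pow]
  _ = pr N gR := by rw [gR_eq]

lemma gQ_pow (m : ℕ) : gQ ^ m = PowerSeries.X ^ (2*m) * iQ ^ m := by
  rw [gQ, mul_pow, ← pow_mul]

lemma coeff_gQ_pow_self (m : ℕ) : PowerSeries.coeff (2*m) (gQ ^ m) = 1 := by
  rw [gQ_pow, PowerSeries.coeff_X_pow_mul', if_pos le_rfl, Nat.sub_self,
    PowerSeries.coeff_zero_eq_constantCoeff_apply, map_pow]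
  have : PowerSeries.constantCoeff iQ = 1 := by
    rw [← PowerSeries.coeff_zero_eq_constantCoeff_apply, iQ, PowerSeries.coeff_mk, pow_zero]
  rw [this, one_pow]

lemma coeff_gQ_pow_of_lt {j m : ℕ} (h : j < 2*m) : PowerSeries.coeff j (gQ ^ m) = 0 := by
  rw [gQ_pow, PowerSeries.coeff_X_pow_mul', if_neg (by omega)]

lemma coeff_gR_pow_self (m : ℕ) : PowerSeries.coeff (2*m) (gR ^ m) = 1 := by
  rw [coeff_gR_pow, coeff_gQ_pow_self, map_one]

lemma coeff_gR_pow_of_lt {j m : ℕ} (h : j < 2*m) : PowerSeries.coeff j (gR ^ m) = 0 := by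
  rw [coeff_gR_pow, coeff_gQ_pow_of_lt h, map_zero]

/-- recursively defined coefficients of `f` as a series in `g`. -/
noncomputable def cseq (f : PowerSeries R) (m : ℕ) : R :=
  PowerSeries.coeff (2*m) f -
    ∑ m' ∈ (Finset.range m).attach,
      cseq f m' * PowerSeries.coeff (2*m) (gR ^ (m' : ℕ))
  termination_by m
  decreasing_by exact Finset.mem_range.mp m'.2

lemma cseq_spec (f : PowerSeries R) (m : ℕ) :
    PowerSeries.coeff (2*m) f
      = ∑ m' ∈ Finset.range (m+1), cseq f m' * PowerSeries.coeff (2*m) (gR ^ m') := by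
  rw [Finset.sum_range_succ, coeff_gR_pow_self, mul_one, cseq,
    ← Finset.sum_attach (Finset.range m) (fun m' => cseq f m' * PowerSeries.coeff (2*m) (gR ^ m'))]
  ring

lemma coeff_sR_pow_self_odd (n : ℕ) (hodd : ¬ (2 ∣ n)) (hn : 1 ≤ n) :
    PowerSeries.coeff n (sR ^ n) = -1 := by
  rw [coeff_sR_pow, coeff_sQ_pow n n hn le_rfl, Nat.sub_self, Nat.choose_zero_right]
  have : ((-1:ℚ))^n = -1 := by
    rcases Nat.even_or_odd n with h | h
    · exact absurd h.two_dvd hodd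
    · exact h.neg_one_pow
  rw [this, Nat.cast_one, mul_one, map_neg, map_one]

lemma coeff_sR_pow_of_lt {j n : ℕ} (h : j < n) : PowerSeries.coeff j (sR ^ n) = 0 := by
  rw [coeff_sR_pow, coeff_sQ_pow_of_lt h, map_zero]

/-- The main structure lemma: an invariant series has coefficients (up to `2k+1`)
matching those of a polynomial in `g`. -/
lemma struct (k : ℕ) (f : PowerSeries R)
    (hf : Ehom (2*k+2) (by omega) (pr (2*k+2) sR) (pr_sR_pow (2*k+2)) f = pr (2*k+2) f) :
    ∀ n < 2*k+2, PowerSeries.coeff n f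
      = ∑ m ∈ Finset.range (k+1), cseq f m * PowerSeries.coeff n (gR ^ m) := by
  set N := 2*k+2 with hN
  set S : PowerSeries R :=
    ∑ m ∈ Finset.range (k+1), PowerSeries.C (cseq f m) * gR ^ m with hS
  have hcoeffS : ∀ n, PowerSeries.coeff n S
      = ∑ m ∈ Finset.range (k+1), cseq f m * PowerSeries.coeff n (gR ^ m) := by
    intro n
    rw [hS, map_sum]
    exact Finset.sum_congr rfl fun m _ => PowerSeries.coeff_C_mul _ _ _
  set D : PowerSeries R := f - S with hD
  have hED : Ehom N (by omega) (pr N sR) (pr_sR_pow N) D = pr N D := by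
    rw [hD, map_sub, map_sub, hf, hS, map_sum, map_sum]
    congr 1
    apply Finset.sum_congr rfl
    intro m _
    rw [map_mul, map_pow, map_mul, map_pow, Ehom_C, Ehom_gR]
  suffices h : ∀ n < N, PowerSeries.coeff n D = 0 by
    intro n hn
    have := h n hn
    rw [hD, map_sub, sub_eq_zero] at this
    rw [this, hcoeffS]
  intro n
  induction n using Nat.strong_induction_on with
  | _ n ih =>
    intro hn
    rcases Nat.even_or_odd n with ⟨m, hm⟩ | hodd
    · -- even case
      have hmk : m ≤ k := by omega
      have hn2 : n = 2*m := by omega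
      rw [hD, map_sub, hn2, cseq_spec f m, hcoeffS, sub_eq_zero]
      apply Finset.sum_subset (by apply Finset.range_subset_range.mpr; omega)
      intro m' _ hm'
      rw [Finset.mem_range, not_lt] at hm'
      rw [coeff_gR_pow_of_lt (by omega), mul_zero]
    · -- odd case
      have hrel := coeff_rel N (by omega) D hED n hn
      have hterm : ∀ i ∈ Finset.range N, i ≠ n →
          PowerSeries.coeff i D * PowerSeries.coeff n (sR ^ i) = 0 := by
        intro i _ hi
        rcases lt_or_gt_of_ne hi with h | h
        · rw [ih i h (by omega), zero_mul]
        · rw [coeff_sR_pow_of_lt h, mul_zero]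
      rw [Finset.sum_eq_single_of_mem n (by rw [Finset.mem_range]; omega) hterm] at hrel
      have hno2 : ¬ (2 ∣ n) := by
        intro ⟨c, hc⟩
        exact (Nat.not_even_iff_odd.mpr hodd) ⟨c, by omega⟩
      rw [coeff_sR_pow_self_odd n hno2 (by
        rcases Nat.eq_zero_or_pos n with rfl | h
        · exact absurd (⟨0, rfl⟩ : 2 ∣ 0) hno2
        · exact h), mul_neg_one] at hrel
      have h2 : PowerSeries.coeff n D + PowerSeries.coeff n D = 0 := by
        linear_combination -hrel
      have hone : (algebraMap ℚ R (1/2) + algebraMap ℚ R (1/2)) = 1 := by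
        rw [← map_add]; norm_num
      calc PowerSeries.coeff n D
          = (algebraMap ℚ R (1/2) + algebraMap ℚ R (1/2)) * PowerSeries.coeff n D := by
            rw [hone, one_mul]
        _ = algebraMap ℚ R (1/2) * (PowerSeries.coeff n D + PowerSeries.coeff n D) := by
            ring
        _ = 0 := by rw [h2, mul_zero]
end Struct

section Final

/-- evaluation `x₁ ↦ k`. -/
noncomputable def ev (k : ℕ) : R →ₐ[ℚ] R :=
  MvPolynomial.aeval (fun j => if j = 1 then MvPolynomial.C ((k:ℚ)) else MvPolynomial.X j)

lemma ev_X1 (k : ℕ) : ev k (MvPolynomial.X 1) = MvPolynomial.C ((k:ℚ)) := by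
  rw [ev, MvPolynomial.aeval_X, if_pos rfl]

lemma ev_algebraMap (k : ℕ) (q : ℚ) : ev k (algebraMap ℚ R q) = algebraMap ℚ R q :=
  (ev k).commutes q

lemma dvd_sub_ev (k : ℕ) (p : R) :
    (MvPolynomial.X 1 - MvPolynomial.C ((k:ℚ))) ∣ (p - ev k p) := by
  induction p using MvPolynomial.induction_on with
  | C a =>
    have : ev k (MvPolynomial.C a) = MvPolynomial.C a := by
      rw [← MvPolynomial.algebraMap_eq, ev_algebraMap]
    rw [this, sub_self]
    exact dvd_zero _
  | add p q hp hq =>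
    rw [map_add, show p + q - (ev k p + ev k q) = (p - ev k p) + (q - ev k q) by ring]
    exact dvd_add hp hq
  | mul_X p j hp =>
    rw [map_mul]
    by_cases hj : j = 1
    · subst hj
      rw [ev_X1, show p * MvPolynomial.X 1 - ev k p * MvPolynomial.C ((k:ℚ))
        = (p - ev k p) * MvPolynomial.X 1
          + ev k p * (MvPolynomial.X 1 - MvPolynomial.C ((k:ℚ))) by ring]
      exact dvd_add (hp.mul_right _) (Dvd.intro_left _ rfl)
    · have : ev k (MvPolynomial.X j) = MvPolynomial.X j := by
        rw [ev, MvPolynomial.aeval_X, if_neg hj]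
      rw [this, show p * MvPolynomial.X j - ev k p * MvPolynomial.X j
        = (p - ev k p) * MvPolynomial.X j by ring]
      exact hp.mul_right _

lemma evRH (k : ℕ) (x : R) : (ev k).toRingHom x = ev k x := rfl

lemma coeff_one_add_X_pow_Q (k n : ℕ) :
    PowerSeries.coeff (R := ℚ) n ((1 + PowerSeries.X)^k) = k.choose n := by
  have h : ((1 + PowerSeries.X : PowerSeries ℚ))^k
      = (((1 + Polynomial.X)^k : Polynomial ℚ) : PowerSeries ℚ) := by
    rw [Polynomial.coe_pow, Polynomial.coe_add, Polynomial.coe_one, Polynomial.coe_X]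
  rw [h, Polynomial.coeff_coe, Polynomial.coeff_one_add_X_pow]

lemma fall_factorial_eq (k n : ℕ) :
    (1 / n.factorial : ℚ) * ∏ i ∈ Finset.range n, ((k:ℚ) - (i:ℚ)) = k.choose n := by
  rcases le_or_gt n k with h | h
  · have hprod : ∏ i ∈ Finset.range n, ((k:ℚ) - (i:ℚ)) = ((k.descFactorial n : ℕ) : ℚ) := by
      rw [Nat.descFactorial_eq_prod_range, Nat.cast_prod]
      apply Finset.prod_congr rfl
      intro i hi
      rw [Finset.mem_range] at hi
      rw [Nat.cast_sub (by omega)]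
    rw [hprod, Nat.descFactorial_eq_factorial_mul_choose]
    have hf : (n.factorial : ℚ) ≠ 0 := by
      exact_mod_cast Nat.factorial_ne_zero n
    push_cast
    field_simp
  · rw [Finset.prod_eq_zero (Finset.mem_range.mpr h) (by rw [sub_self]),
      Nat.choose_eq_zero_of_lt h]
    simp
lemma map_ev_onePlus (k : ℕ) :
    PowerSeries.map (ev k).toRingHom onePlusTPowX1
      = iota ((1 + PowerSeries.X)^k) := by
  ext n
  rw [PowerSeries.coeff_map, evRH, coeff_iota, coeff_one_add_X_pow_Q, onePlusTPowX1,
    PowerSeries.coeff_mk, map_mul, ev_algebraMap, map_prod]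
  have hfac : ∀ i ∈ Finset.range n,
      ev k (MvPolynomial.X 1 - algebraMap ℚ R (i:ℚ)) = algebraMap ℚ R ((k:ℚ) - (i:ℚ)) := by
    intro i _
    rw [map_sub, ev_X1, ev_algebraMap, map_sub, MvPolynomial.algebraMap_eq]
  rw [Finset.prod_congr rfl hfac, ← map_prod (algebraMap ℚ R), ← map_mul,
    fall_factorial_eq k n]

lemma aux_prod (k m : ℕ) (h : m ≤ k) :
    (1 + PowerSeries.X : PowerSeries ℚ)^k * gQ^m
      = PowerSeries.X^(2*m) * (1 + PowerSeries.X)^(k-m) := by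
  have hk : (1 + PowerSeries.X : PowerSeries ℚ)^k
      = (1 + PowerSeries.X)^(k-m) * (1 + PowerSeries.X)^m := by
    rw [← pow_add]
    congr 1
    omega
  rw [gQ_pow, hk]
  calc (1 + PowerSeries.X : PowerSeries ℚ)^(k-m) * (1 + PowerSeries.X)^m
        * (PowerSeries.X^(2*m) * iQ^m)
      = PowerSeries.X^(2*m) * (1 + PowerSeries.X)^(k-m)
        * ((1 + PowerSeries.X)^m * iQ^m) := by ring
  _ = PowerSeries.X^(2*m) * (1 + PowerSeries.X)^(k-m) := by
      rw [one_add_X_pow_mul_iQ_pow, mul_one]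

lemma coeff_final_zero (k m : ℕ) (h : m ≤ k) :
    PowerSeries.coeff (2*k+1) ((1 + PowerSeries.X)^k * gQ^m) = 0 := by
  rw [aux_prod k m h, PowerSeries.coeff_X_pow_mul', if_pos (by omega), coeff_one_add_X_pow_Q]
  have : (k-m).choose (2*k+1-2*m) = 0 := Nat.choose_eq_zero_of_lt (by omega)
  rw [this, Nat.cast_zero]

lemma key_coeff (k : ℕ) :
    PowerSeries.coeff (2*k+1)
      (PowerSeries.map (ev k).toRingHom onePlusTPowX1
        * PowerSeries.map (ev k).toRingHom (expS G)) = 0 := by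
  have hH : ∀ n < 2*k+2,
      PowerSeries.coeff n (PowerSeries.map (ev k).toRingHom (expS G))
        = ∑ m ∈ Finset.range (k+1),
            ev k (cseq (expS G) m) * PowerSeries.coeff n (gR ^ m) := by
    intro n hn
    rw [PowerSeries.coeff_map, evRH, struct k (expS G) (Ehom_expS_G _ _) n hn, map_sum]
    apply Finset.sum_congr rfl
    intro m _
    rw [map_mul, coeff_gR_pow, ev_algebraMap, ← coeff_gR_pow]
  rw [PowerSeries.coeff_mul]
  set P := PowerSeries.map (ev k).toRingHom onePlusTPowX1 with hPdef
  have hpair : ∀ p ∈ Finset.HasAntidiagonal.antidiagonal (2*k+1),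
      PowerSeries.coeff p.1 P
        * PowerSeries.coeff p.2 (PowerSeries.map (ev k).toRingHom (expS G))
      = ∑ m ∈ Finset.range (k+1), ev k (cseq (expS G) m)
          * (PowerSeries.coeff p.1 P * PowerSeries.coeff p.2 (gR ^ m)) := by
    intro p hp
    rw [Finset.HasAntidiagonal.mem_antidiagonal] at hp
    rw [hH p.2 (by omega), Finset.mul_sum]
    apply Finset.sum_congr rfl
    intro m _
    ring
  rw [Finset.sum_congr rfl hpair, Finset.sum_comm]
  apply Finset.sum_eq_zero
  intro m hm
  rw [Finset.mem_range] at hm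
  rw [← Finset.mul_sum, ← PowerSeries.coeff_mul]
  have hPg : P * gR ^ m = iota ((1 + PowerSeries.X)^k * gQ^m) := by
    rw [hPdef, map_ev_onePlus, gR, ← map_pow, ← map_mul]
  rw [hPg, coeff_iota, coeff_final_zero k m (by omega), map_zero, mul_zero]

end Final

/-- For every `k ≥ 0`, `F_{2k+1}` is divisible by `x_1 − k` in `ℚ[x_1, x_2, …]`. -/
theorem X1_sub_k_dvd_F_odd (k : ℕ) :
    (MvPolynomial.X 1 - algebraMap ℚ R k) ∣ F (2 * k + 1) := by
  have hev0 : ev k (F (2 * k + 1)) = 0 := by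
    rw [F, map_mul, ev_algebraMap]
    have h1 : ev k (PowerSeries.coeff (2*k+1) (onePlusTPowX1 * expS G))
        = PowerSeries.coeff (2*k+1)
            (PowerSeries.map (ev k).toRingHom (onePlusTPowX1 * expS G)) := by
      rw [PowerSeries.coeff_map, evRH]
    rw [h1, map_mul, key_coeff, mul_zero]
  have hd := dvd_sub_ev k (F (2*k+1))
  rw [hev0, sub_zero] at hd
  rw [MvPolynomial.algebraMap_eq]
  exact hd
end
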